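/- arXiv:2308.09989 — 9 statements merged into one kernel-verified Lean document; each statement's English description precedes it below -/
import Mathlib

section
/- Let K/G be an immediate extension of valued abelian groups and let h ∈ K ∖ G. Then there exists a pseudo-Cauchy sequence in G which has h as a pseudo-limit and which has no pseudo-limit in G. -/
universe u

/-- `v : G → Γ` is a valuation making the abelian group `G` a valued abelian group:
`Γ` is a linear order with greatest element `⊤` (denoted `∞` in the paper), `v` is
surjective, `v g = ⊤` iff `g = 0`, and `v (g - h) ≥ min (v g) (v h)`. -/
structure IsValuedGroup {G Γ : Type*} [AddCommGroup G] [LinearOrder Γ] [OrderTop Γ]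
    (v : G → Γ) : Prop where
  surjective : Function.Surjective v
  eq_top_iff : ∀ g : G, v g = ⊤ ↔ g = 0
  min_le_sub : ∀ g h : G, min (v g) (v h) ≤ v (g - h)

/-- A sequence `a` indexed by a linearly ordered set `I` is pseudo-Cauchy if eventually
`v (a i - a j) < v (a j - a k)` for `i < j < k`. -/
def IsPseudoCauchy {G Γ I : Type*} [AddCommGroup G] [LinearOrder Γ] [LinearOrder I]
    (v : G → Γ) (a : I → G) : Prop :=
  ∃ i₀ : I, ∀ i j k : I, i₀ ≤ i → i < j → j < k → v (a i - a j) < v (a j - a k)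

/-- `x` is a pseudo-limit of the sequence `a` if eventually
`v (a i - x) = v (a i - a j)` for `i < j`. -/
def IsPseudoLimit {G Γ I : Type*} [AddCommGroup G] [LinearOrder Γ] [LinearOrder I]
    (v : G → Γ) (a : I → G) (x : G) : Prop :=
  ∃ i₀ : I, ∀ i j : I, i₀ ≤ i → i < j → v (a i - x) = v (a i - a j)

/-- For subsets `G ⊆ K` of an ambient valued abelian group `(H, v)`, `K` is an immediate
extension of `G` (both regarded as valued groups via restriction of `v`): the nonzero
values of `K` and of `G` coincide, and for every value `γ` of `G` and every `k ∈ K` with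
`v k ≥ γ` there is `g ∈ G` with `v g ≥ γ` and `v (k - g) > γ` (i.e. the inclusion induces
isomorphisms of ribs). -/
def IsImmediateIn {H Γ : Type*} [AddCommGroup H] [LinearOrder Γ] [OrderTop Γ]
    (v : H → Γ) (G K : Set H) : Prop :=
  (∀ k ∈ K, k ≠ 0 → ∃ g ∈ G, g ≠ 0 ∧ v g = v k) ∧
  (∀ γ : Γ, (∃ g ∈ G, g ≠ 0 ∧ v g = γ) →
    ∀ k ∈ K, γ ≤ v k → ∃ g ∈ G, γ ≤ v g ∧ γ < v (k - g))

/-- Let `K/G` be an immediate extension of valued abelian groups and let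
`h ∈ K ∖ G`. Then there exists a pseudo-Cauchy sequence in `G` (indexed by a well-ordered
set with no greatest element) which has `h` as a pseudo-limit and which has no pseudo-limit
in `G`. -/
theorem exists_pseudoCauchy_of_immediate {K Γ : Type u} [AddCommGroup K] [LinearOrder Γ]
    [OrderTop Γ] (v : K → Γ) (hv : IsValuedGroup v) (G : AddSubgroup K)
    (himm : IsImmediateIn v (G : Set K) Set.univ) (h : K) (hh : h ∉ G) :
    ∃ (I : Type u) (_ : LinearOrder I) (_ : WellFoundedLT I) (_ : NoMaxOrder I)
      (_ : Nonempty I) (a : I → K),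
      (∀ i, a i ∈ G) ∧ IsPseudoCauchy v a ∧ IsPseudoLimit v a h ∧
      ∀ x ∈ G, ¬ IsPseudoLimit v a x := by
  classical
  have v0 : v 0 = ⊤ := (hv.eq_top_iff 0).2 rfl
  have vneg : ∀ g : K, v (-g) = v g := by
    have key : ∀ g : K, v g ≤ v (-g) := by
      intro g
      have := hv.min_le_sub 0 g
      simpa [v0] using this
    intro g
    exact le_antisymm (by simpa using key (-g)) (key g)
  have vsub : ∀ g k : K, v (g - k) = v (k - g) := by
    intro g k; rw [← vneg (g - k), neg_sub]
  set S : Set Γ := {γ | ∃ g ∈ G, v (h - g) = γ} with hSdef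
  have hSne : S.Nonempty := ⟨v (h - 0), 0, G.zero_mem, rfl⟩
  have hSnomax : ∀ γ ∈ S, ∃ γ' ∈ S, γ < γ' := by
    rintro γ ⟨g, hgG, hgv⟩
    have hne : h - g ≠ 0 := sub_ne_zero.2 (fun e => hh (e ▸ hgG))
    obtain ⟨g₀, hg₀G, hg₀ne, hg₀v⟩ := himm.1 (h - g) (Set.mem_univ _) hne
    obtain ⟨g', hg'G, -, hlt⟩ := himm.2 γ ⟨g₀, hg₀G, hg₀ne, by rw [hg₀v, hgv]⟩
      (h - g) (Set.mem_univ _) (hgv ▸ le_rfl)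
    refine ⟨v (h - (g + g')), ⟨g + g', G.add_mem hgG hg'G, rfl⟩, ?_⟩
    rw [sub_add_eq_sub_sub]
    exact hlt
  -- a well-ordered cofinal subset of S
  let r : ↥S → ↥S → Prop := WellOrderingRel
  haveI hwo : IsWellOrder ↥S r := WellOrderingRel.isWellOrder
  have hwf : WellFounded r := hwo.wf
  let C : Set ↥S := {x | ∀ y : ↥S, r y x → (y : Γ) < (x : Γ)}
  have hcof : ∀ x : ↥S, ∃ b ∈ C, (x : Γ) ≤ (b : Γ) := by
    intro x
    have hTne : {a : ↥S | (x : Γ) ≤ (a : Γ)}.Nonempty := ⟨x, le_rfl⟩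
    set m := hwf.min _ hTne with hm
    have hmT : (x : Γ) ≤ (m : Γ) := hwf.min_mem _ hTne
    refine ⟨m, ?_, hmT⟩
    intro y hy
    have hynT : ¬ (x : Γ) ≤ (y : Γ) := fun hyT => hwf.not_lt_min _ hyT hy
    exact lt_of_lt_of_le (lt_of_not_ge hynT) hmT
  haveI hWF : WellFoundedLT ↥C := by
    constructor
    refine Subrelation.wf (r := fun a b : ↥C => r a.1 b.1) ?_ (InvImage.wf _ hwf)
    intro a b hab
    rcases trichotomous_of r a.1 b.1 with hr | he | hr
    · exact hr
    · exact absurd (Subtype.ext he) (ne_of_lt hab)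
    · exact absurd (a.2 b.1 hr) (not_lt_of_gt (show (a.1 : Γ) < (b.1 : Γ) from hab))
  haveI hNM : NoMaxOrder ↥C := by
    constructor
    intro i
    obtain ⟨γ', hγ'S, hγ'lt⟩ := hSnomax i.1.1 i.1.2
    obtain ⟨b, hbC, hble⟩ := hcof ⟨γ', hγ'S⟩
    exact ⟨⟨b, hbC⟩, show (i.1 : Γ) < (b : Γ) from lt_of_lt_of_le hγ'lt hble⟩
  haveI hNE : Nonempty ↥C := by
    obtain ⟨γ, hγ⟩ := hSne
    obtain ⟨b, hbC, -⟩ := hcof ⟨γ, hγ⟩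
    exact ⟨⟨b, hbC⟩⟩
  refine ⟨↥C, inferInstance, hWF, hNM, hNE, ?_⟩
  -- the sequence
  have hex : ∀ i : ↥C, ∃ g, g ∈ G ∧ v (h - g) = (i.1 : Γ) := by
    intro i
    obtain ⟨g, hgG, hgv⟩ := i.1.2
    exact ⟨g, hgG, hgv⟩
  choose a haG hav using hex
  have hlt_coe : ∀ {i j : ↥C}, i < j → (i.1 : Γ) < (j.1 : Γ) := fun hij => hij
  -- key computation
  have vdiff : ∀ i j : ↥C, i < j → v (a i - a j) = (i.1 : Γ) := by
    intro i j hij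
    have hij' : (i.1 : Γ) < (j.1 : Γ) := hlt_coe hij
    have h1 : min (v (h - a j)) (v (h - a i)) ≤ v (a i - a j) := by
      have := hv.min_le_sub (h - a j) (h - a i)
      rwa [sub_sub_sub_cancel_left] at this
    rw [hav i, hav j, min_eq_right (le_of_lt hij')] at h1
    have h2 : min (v (h - a j)) (v (a i - a j)) ≤ v (h - a i) := by
      have := hv.min_le_sub (h - a j) (a i - a j)
      have e : (h - a j) - (a i - a j) = h - a i := by abel
      rwa [e] at this
    rw [hav i, hav j] at h2
    rcases le_or_gt (v (a i - a j)) (i.1 : Γ) with hle | hgt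
    · exact le_antisymm hle h1
    · exfalso
      rcases min_le_iff.1 h2 with hc | hc
      · exact absurd hc (not_le_of_gt hij')
      · exact absurd hc (not_le_of_gt hgt)
  obtain ⟨i₀⟩ : Nonempty ↥C := by
    obtain ⟨γ, hγ⟩ := hSne
    obtain ⟨b, hbC, -⟩ := hcof ⟨γ, hγ⟩
    exact ⟨⟨b, hbC⟩⟩
  refine ⟨a, haG, ⟨i₀, ?_⟩, ⟨i₀, ?_⟩, ?_⟩
  · intro i j k _ hij hjk
    rw [vdiff i j hij, vdiff j k hjk]
    exact hlt_coe hij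
  · intro i j _ hij
    rw [vdiff i j hij, ← hav i, vsub]
  · rintro x hxG ⟨j₀, hlim⟩
    -- v (h - x) ∈ S; pick an index above it and above j₀
    have hhx : v (h - x) ∈ S := ⟨x, hxG, rfl⟩
    obtain ⟨b, hbC, hble⟩ := hcof ⟨v (h - x), hhx⟩
    set i : ↥C := max j₀ ⟨b, hbC⟩ with hi
    obtain ⟨j, hij⟩ := exists_gt i
    obtain ⟨k, hjk⟩ := exists_gt j
    have hj₀j : j₀ ≤ j := le_of_lt (lt_of_le_of_lt (le_max_left _ _) hij)
    have h1 : v (a j - x) = (j.1 : Γ) := by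
      rw [hlim j k hj₀j hjk, vdiff j k hjk]
    have h2 : v (h - a j) = (j.1 : Γ) := hav j
    have h3 : min (v (h - a j)) (v (x - a j)) ≤ v (h - x) := by
      have := hv.min_le_sub (h - a j) (x - a j)
      have e : (h - a j) - (x - a j) = h - x := by abel
      rwa [e] at this
    rw [h2, vsub x (a j), h1, min_self] at h3
    have h4 : v (h - x) < (j.1 : Γ) := by
      refine lt_of_le_of_lt ?_ (hlt_coe hij)
      exact le_trans hble (show ((⟨b, hbC⟩ : ↥C).1 : Γ) ≤ (i.1 : Γ) from le_max_right j₀ _)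
    exact absurd h3 (not_le_of_gt h4)
end

section
/- If an extension H/G of valued abelian groups is pseudo-complete, then H/G is maximal; in particular, every pseudo-complete valued abelian group is maximal. -/
universe u

/-- Relative pseudo-completeness: every pseudo-Cauchy sequence with entries in `G` which
has a pseudo-limit in `K` already has a pseudo-limit in `G` (all inside the ambient valued
abelian group `(H, v)`). -/
def IsPseudoCompleteIn {H Γ : Type u} [AddCommGroup H] [LinearOrder Γ]
    (v : H → Γ) (G K : Set H) : Prop :=
  ∀ (I : Type u) [LinearOrder I] [WellFoundedLT I] [NoMaxOrder I] [Nonempty I]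
    (a : I → H), (∀ i, a i ∈ G) → IsPseudoCauchy v a →
    (∃ x ∈ K, IsPseudoLimit v a x) → ∃ x ∈ G, IsPseudoLimit v a x

/-- A valued abelian group is pseudo-complete if every pseudo-Cauchy sequence in it
admits a pseudo-limit in it. -/
def IsPseudoComplete {G Γ : Type u} [AddCommGroup G] [LinearOrder Γ] (v : G → Γ) : Prop :=
  ∀ (I : Type u) [LinearOrder I] [WellFoundedLT I] [NoMaxOrder I] [Nonempty I]
    (a : I → G), IsPseudoCauchy v a → ∃ x : G, IsPseudoLimit v a x

/-- The extension `H/G` is maximal: there is no subgroup `K` with `G ⊊ K ⊆ H` such that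
`K/G` is immediate. -/
def IsMaximalIn {H Γ : Type u} [AddCommGroup H] [LinearOrder Γ] [OrderTop Γ]
    (v : H → Γ) (G : AddSubgroup H) : Prop :=
  ∀ K : AddSubgroup H, G < K → ¬ IsImmediateIn v (G : Set H) (K : Set H)

/-- A valued abelian group `(G, v)` is maximal if it admits no proper immediate extension:
whenever `(H, w)` is a valued abelian group (with the same value set, as immediate extensions
preserve the skeleton) and `f : G →+ H` is an injective valuation-preserving homomorphism
making `H` an immediate extension of the image of `G`, then `f` is surjective. -/
def IsMaximal {G Γ : Type u} [AddCommGroup G] [LinearOrder Γ] [OrderTop Γ]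
    (v : G → Γ) : Prop :=
  ∀ (H : Type u) (_ : AddCommGroup H) (w : H → Γ), IsValuedGroup w →
    ∀ f : G →+ H, Function.Injective f → (∀ g : G, w (f g) = v g) →
      IsImmediateIn w (Set.range f) Set.univ → Function.Surjective f

section Aux

variable {H Γ : Type u} [AddCommGroup H] [LinearOrder Γ] [OrderTop Γ] {v : H → Γ}

lemma IsValuedGroup.v_zero (hv : IsValuedGroup v) : v 0 = ⊤ := (hv.eq_top_iff 0).mpr rfl

lemma IsValuedGroup.v_neg (hv : IsValuedGroup v) (g : H) : v (-g) = v g := by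
  have h1 : ∀ x : H, v x ≤ v (-x) := by
    intro x
    have := hv.min_le_sub 0 x
    simpa [hv.v_zero] using this
  exact le_antisymm (by simpa using h1 (-g)) (h1 g)

lemma IsValuedGroup.min_le_add (hv : IsValuedGroup v) (g h : H) :
    min (v g) (v h) ≤ v (g + h) := by
  have := hv.min_le_sub g (-h)
  simpa [hv.v_neg, sub_neg_eq_add] using this

lemma IsValuedGroup.v_sub_of_lt (hv : IsValuedGroup v) {x y : H} (hxy : v x < v y) :
    v (x - y) = v x := by
  refine le_antisymm ?_ (le_trans (le_of_eq (min_eq_left hxy.le).symm) (hv.min_le_sub x y))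
  by_contra h
  push_neg at h
  have h2 : min (v (x - y)) (v y) ≤ v x := by
    have := hv.min_le_add (x - y) y
    simpa using this
  rcases min_le_iff.mp h2 with h' | h'
  · exact absurd h' (not_le.mpr h)
  · exact absurd h' (not_le.mpr hxy)

/-- Core construction: if `a ∉ G` can be approximated arbitrarily well from `G`
(no best approximation), then there is a pseudo-Cauchy sequence in `G` with
pseudo-limit `a` but no pseudo-limit in `G`. -/
lemma core_lemma (hv : IsValuedGroup v) (G : Set H) (h0 : (0 : H) ∈ G) (a : H)
    (himm : ∀ g ∈ G, ∃ g' ∈ G, v (a - g) < v (a - g')) :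
    ∃ (I : Type u) (_ : LinearOrder I),
      WellFoundedLT I ∧ NoMaxOrder I ∧ Nonempty I ∧
      ∃ b : I → H, (∀ i, b i ∈ G) ∧ IsPseudoCauchy v b ∧
        IsPseudoLimit v b a ∧ ∀ x ∈ G, ¬ IsPseudoLimit v b x := by
  classical
  set S : Set Γ := {γ | ∃ g ∈ G, v (a - g) = γ} with hS
  let r : Γ → Γ → Prop := WellOrderingRel
  have hrwo : IsWellOrder Γ r := WellOrderingRel.isWellOrder
  set W : Set Γ := {γ | γ ∈ S ∧ ∀ δ ∈ S, r δ γ → δ < γ} with hW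
  have hcof : ∀ s ∈ S, ∃ m ∈ W, s ≤ m := by
    intro s hs
    have hne : {γ | γ ∈ S ∧ s ≤ γ}.Nonempty := ⟨s, hs, le_rfl⟩
    obtain ⟨m, hm, hmin⟩ := hrwo.wf.has_min _ hne
    refine ⟨m, ⟨hm.1, ?_⟩, hm.2⟩
    intro δ hδ hrδ
    by_contra hlt
    push_neg at hlt
    exact hmin δ ⟨hδ, le_trans hm.2 hlt⟩ hrδ
  have hSnomax : ∀ s ∈ S, ∃ t ∈ S, s < t := by
    rintro s ⟨g, hg, rfl⟩
    obtain ⟨g', hg', hlt⟩ := himm g hg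
    exact ⟨v (a - g'), ⟨g', hg', rfl⟩, hlt⟩
  haveI hWF : WellFoundedLT ↥W := by
    constructor
    refine Subrelation.wf (r := fun x y : ↥W => r x.val y.val) ?_
      (InvImage.wf _ hrwo.wf)
    intro x y hxy
    rcases (haveI := hrwo; trichotomous_of r x.val y.val) with h | h | h
    · exact h
    · exact absurd (Subtype.ext h) (ne_of_lt hxy)
    · exact absurd (x.2.2 y.val y.2.1 h) (not_lt.mpr (le_of_lt hxy))
  haveI hNM : NoMaxOrder ↥W := by
    constructor
    rintro ⟨s, hsW⟩
    obtain ⟨t, ht, hst⟩ := hSnomax s hsW.1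
    obtain ⟨m, hmW, htm⟩ := hcof t ht
    exact ⟨⟨m, hmW⟩, Subtype.mk_lt_mk.mpr (lt_of_lt_of_le hst htm)⟩
  haveI hNE : Nonempty ↥W := by
    obtain ⟨m, hm, _⟩ := hcof (v (a - 0)) ⟨0, h0, rfl⟩
    exact ⟨⟨m, hm⟩⟩
  refine ⟨↥W, inferInstance, hWF, hNM, hNE, ?_⟩
  · have hmem : ∀ i : ↥W, ∃ g ∈ G, v (a - g) = i.val := fun i => i.2.1
    choose b hbG hbv using hmem
    have hkey : ∀ i j : ↥W, i < j → v (b i - b j) = i.val := by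
      intro i j hij
      have h1 : v (a - b i) < v (a - b j) := by
        rw [hbv, hbv]; exact hij
      have e : (a - b i) - (a - b j) = -(b i - b j) := by abel
      calc v (b i - b j) = v (-(b i - b j)) := (hv.v_neg _).symm
        _ = v ((a - b i) - (a - b j)) := by rw [e]
        _ = v (a - b i) := hv.v_sub_of_lt h1
        _ = i.val := hbv i
    have hnonempty : Nonempty ↥W := by
      obtain ⟨m, hm, _⟩ := hcof (v (a - 0)) ⟨0, h0, rfl⟩
      exact ⟨⟨m, hm⟩⟩
    refine ⟨b, hbG, ⟨Classical.arbitrary _, ?_⟩, ⟨Classical.arbitrary _, ?_⟩, ?_⟩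
    · intro i j k _ hij hjk
      rw [hkey i j hij, hkey j k hjk]
      exact hij
    · intro i j _ hij
      have : v (b i - a) = v (a - b i) := by
        rw [← hv.v_neg (b i - a)]; congr 1; abel
      rw [this, hbv, hkey i j hij]
    · rintro x hxG ⟨i₀, hlim⟩
      obtain ⟨t, ht, hlt⟩ := hSnomax (v (a - x)) ⟨x, hxG, rfl⟩
      obtain ⟨m, hmW, htm⟩ := hcof t ht
      set i : ↥W := max ⟨m, hmW⟩ i₀ with hi
      obtain ⟨j, hj⟩ := exists_gt i
      have h1 : v (b i - x) = i.val := by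
        rw [hlim i j (le_max_right _ _) hj, hkey i j hj]
      have h2 : v (a - b i) = i.val := hbv i
      have h3 : (i : Γ) ≤ v (a - x) := by
        have e : a - x = (a - b i) + (b i - x) := by abel
        rw [e]
        refine le_trans ?_ (hv.min_le_add _ _)
        rw [h1, h2]; simp
      have h5 : (m : Γ) ≤ (i : Γ) := by
        exact_mod_cast (le_max_left (⟨m, hmW⟩ : ↥W) i₀)
      exact absurd h3 (not_le.mpr (lt_of_lt_of_le hlt (le_trans htm h5)))

end Aux


/-- If an extension `H/G` of valued abelian groups is pseudo-complete,
then `H/G` is maximal; in particular, every pseudo-complete valued abelian group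
is maximal. -/
theorem maximal_of_pseudoComplete :
    (∀ (H Γ : Type u) (_ : AddCommGroup H) (_ : LinearOrder Γ) (_ : OrderTop Γ)
       (v : H → Γ), IsValuedGroup v → ∀ G : AddSubgroup H,
         IsPseudoCompleteIn v (G : Set H) Set.univ → IsMaximalIn v G) ∧
    (∀ (G Γ : Type u) (_ : AddCommGroup G) (_ : LinearOrder Γ) (_ : OrderTop Γ)
       (v : G → Γ), IsValuedGroup v → IsPseudoComplete v → IsMaximal v) := by
  constructor
  · intro H Γ _ _ _ v hv G hpc K hGK him
    obtain ⟨him1, him2⟩ := him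
    obtain ⟨a, haK, haG⟩ := SetLike.exists_of_lt hGK
    have himm : ∀ g ∈ (G : Set H), ∃ g' ∈ (G : Set H), v (a - g) < v (a - g') := by
      intro g hg
      have hk : a - g ∈ K := K.sub_mem haK (hGK.le hg)
      have hne : a - g ≠ 0 := sub_ne_zero.mpr (by rintro rfl; exact haG hg)
      obtain ⟨g₀, hg₀G, hg₀ne, hg₀v⟩ := him1 (a - g) hk hne
      obtain ⟨g₁, hg₁G, _, hg₁lt⟩ :=
        him2 (v (a - g)) ⟨g₀, hg₀G, hg₀ne, hg₀v⟩ (a - g) hk le_rfl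
      refine ⟨g + g₁, G.add_mem hg hg₁G, ?_⟩
      have e : a - g - g₁ = a - (g + g₁) := by abel
      rwa [e] at hg₁lt
    obtain ⟨I, ilo, hwf, hnm, hne', b, hbG, hbc, hba, hno⟩ :=
      core_lemma hv (G : Set H) G.zero_mem a himm
    haveI := hwf; haveI := hnm; haveI := hne'
    obtain ⟨x, hxG, hx⟩ := hpc I b hbG hbc ⟨a, Set.mem_univ a, hba⟩
    exact hno x hxG hx
  · intro G Γ _ _ _ v hv hpc H _ w hw f hinj hval him a
    obtain ⟨him1, him2⟩ := him
    by_contra ha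
    have haG : a ∉ Set.range f := by
      rintro ⟨x, rfl⟩; exact ha ⟨x, rfl⟩
    have himm : ∀ g ∈ Set.range f, ∃ g' ∈ Set.range f, w (a - g) < w (a - g') := by
      rintro g ⟨y, rfl⟩
      have hne : a - f y ≠ 0 := sub_ne_zero.mpr (by rintro rfl; exact haG ⟨y, rfl⟩)
      obtain ⟨g₀, hg₀G, hg₀ne, hg₀v⟩ := him1 (a - f y) (Set.mem_univ _) hne
      obtain ⟨g₁, hg₁G, _, hg₁lt⟩ :=
        him2 (w (a - f y)) ⟨g₀, hg₀G, hg₀ne, hg₀v⟩ (a - f y) (Set.mem_univ _) le_rfl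
      obtain ⟨y₁, rfl⟩ := hg₁G
      refine ⟨f (y + y₁), ⟨y + y₁, rfl⟩, ?_⟩
      have e : a - f y - f y₁ = a - f (y + y₁) := by rw [map_add]; abel
      rwa [e] at hg₁lt
    obtain ⟨I, ilo, hwf, hnm, hne', b, hbG, hbc, hba, hno⟩ :=
      core_lemma hw (Set.range f) ⟨0, map_zero f⟩ a himm
    haveI := hwf; haveI := hnm; haveI := hne'
    choose c hc using hbG
    have hvc : ∀ i j, v (c i - c j) = w (b i - b j) := by
      intro i j
      rw [← hval, map_sub, hc, hc]
    have hcc : IsPseudoCauchy v c := by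
      obtain ⟨i₀, h⟩ := hbc
      exact ⟨i₀, fun i j k h1 h2 h3 => by rw [hvc, hvc]; exact h i j k h1 h2 h3⟩
    obtain ⟨x, i₀, hx⟩ := hpc I c hcc
    refine hno (f x) ⟨x, rfl⟩ ⟨i₀, fun i j h1 h2 => ?_⟩
    have e : w (b i - f x) = v (c i - x) := by rw [← hval, map_sub, hc]
    rw [e, hx i j h1 h2, hvc]
end

section
/- Let (G, v) be a ℤ-invariant valued abelian group, let p be a prime number, and let g ∈ G ∖ pG. Then for every g' in the subgroup generated by pG and g but not in pG (equivalently, every g' ∈ pG + i·g with 0 < i < p), one has Δ_p(g') = Δ_p(g), where Δ_p(x) := {v(x − p·y) : y ∈ G}. -/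
universe u

theorem IsValuedGroup.v_neg_s3 {G Γ : Type*} [AddCommGroup G] [LinearOrder Γ] [OrderTop Γ]
    {v : G → Γ} (hv : IsValuedGroup v) (x : G) : v (-x) = v x := by
  have h0 : v 0 = ⊤ := (hv.eq_top_iff 0).mpr rfl
  have key : ∀ y : G, v y ≤ v (-y) := by
    intro y
    have := hv.min_le_sub 0 y
    simpa [h0] using this
  exact le_antisymm (by simpa using key (-x)) (key x)

theorem zsmul_v {G Γ : Type*} [AddCommGroup G] [LinearOrder Γ] [OrderTop Γ]
    {v : G → Γ} (hv : IsValuedGroup v)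
    (hinv : ∀ (g : G) (n : ℕ), 0 < n → v (n • g) = v g)
    (x : G) (n : ℤ) (hn : n ≠ 0) : v (n • x) = v x := by
  rcases n.natAbs_eq with h | h
  · rw [h, natCast_zsmul]
    exact hinv x n.natAbs (Int.natAbs_pos.mpr hn)
  · rw [h, neg_smul, natCast_zsmul, hv.v_neg_s3]
    exact hinv x n.natAbs (Int.natAbs_pos.mpr hn)


/-- Let `(G, v)` be a ℤ-invariant valued abelian group, `p` a prime, and
`g ∈ G ∖ pG`. Then for every `g'` in the subgroup generated by `pG` and `g` which is not in
`pG`, one has `Δ_p(g') = Δ_p(g)`, where `Δ_p(x) = {v (x - p • y) : y ∈ G}`. -/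
theorem delta_p_eq_of_mem_closure {G Γ : Type*} [AddCommGroup G] [LinearOrder Γ] [OrderTop Γ]
    (v : G → Γ) (hv : IsValuedGroup v)
    (hinv : ∀ (g : G) (n : ℕ), 0 < n → v (n • g) = v g)
    (p : ℕ) (hp : p.Prime) (g : G) (hg : ∀ y : G, g ≠ p • y)
    (g' : G) (hg' : g' ∈ AddSubgroup.closure ({x : G | ∃ y : G, x = p • y} ∪ {g}))
    (hg'p : ∀ y : G, g' ≠ p • y) :
    {δ : Γ | ∃ y : G, v (g' - p • y) = δ} = {δ : Γ | ∃ y : G, v (g - p • y) = δ} := by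
  -- decompose g' = p • y0 + k • g
  have hdecomp : ∃ (y0 : G) (k : ℤ), g' = p • y0 + k • g := by
    let H : AddSubgroup G :=
      { carrier := {x | ∃ (y0 : G) (k : ℤ), x = p • y0 + k • g}
        zero_mem' := ⟨0, 0, by simp⟩
        add_mem' := by
          rintro a b ⟨y1, k1, rfl⟩ ⟨y2, k2, rfl⟩
          exact ⟨y1 + y2, k1 + k2, by rw [smul_add, add_smul]; abel⟩
        neg_mem' := by
          rintro a ⟨y1, k1, rfl⟩
          exact ⟨-y1, -k1, by rw [smul_neg, neg_smul]; abel⟩ }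
    have hsub : ({x : G | ∃ y : G, x = p • y} ∪ {g}) ⊆ H := by
      rintro x (⟨y, rfl⟩ | rfl)
      · exact ⟨y, 0, by simp⟩
      · exact ⟨0, 1, by simp⟩
    exact (AddSubgroup.closure_le H).mpr hsub hg'
  obtain ⟨y0, k, hk⟩ := hdecomp
  -- p does not divide k
  have hpk : ¬ (p : ℤ) ∣ k := by
    rintro ⟨j, rfl⟩
    apply hg'p (y0 + j • g)
    rw [hk, smul_add]
    congr 1
    rw [mul_smul, natCast_zsmul]
  have hk0 : k ≠ 0 := by rintro rfl; exact hpk (dvd_zero _)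
  -- coprimality: get a, m with a * k = 1 + p * m
  have hcop : IsCoprime (p : ℤ) (k : ℤ) :=
    (Int.prime_iff_natAbs_prime.mpr (by simpa using hp)).coprime_iff_not_dvd.mpr hpk
  obtain ⟨b, a, hab⟩ := hcop
  -- a * k = 1 + p * m with m := -b
  set m : ℤ := -b with hm
  have key : a * k = 1 + (p : ℤ) * m := by rw [hm]; linarith [hab]
  have ha0 : a ≠ 0 := by
    rintro rfl
    have : (p : ℤ) ∣ 1 := ⟨-m, by linarith [key]⟩
    have := Int.le_of_dvd one_pos this
    have hp2 := hp.two_le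
    omega
  ext δ
  simp only [Set.mem_setOf_eq]
  constructor
  · rintro ⟨y, rfl⟩
    refine ⟨a • (y - y0) - m • g, ?_⟩
    rw [← zsmul_v hv hinv (g' - p • y) a ha0]
    congr 1
    simp only [hk, ← natCast_zsmul]
    match_scalars <;> linarith [hab]
  · rintro ⟨y, rfl⟩
    refine ⟨y0 + k • y, ?_⟩
    rw [← zsmul_v hv hinv (g - p • y) k hk0]
    congr 1
    simp only [hk, ← natCast_zsmul]
    match_scalars <;> ring
end

section
/- A ℤ-invariant valued abelian group G is maximal if and only if it is pseudo-complete. -/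
universe u

namespace IsValuedGroup
variable {G Γ : Type*} [AddCommGroup G] [LinearOrder Γ] [OrderTop Γ] {v : G → Γ}
  (hv : IsValuedGroup v)
include hv

lemma v_zero_s7 : v 0 = ⊤ := (hv.eq_top_iff 0).2 rfl

lemma v_neg_s7 (g : G) : v (-g) = v g := by
  have h1 := hv.min_le_sub 0 g
  have h2 := hv.min_le_sub 0 (-g)
  simp [hv.v_zero_s7] at h1 h2
  exact le_antisymm (by simpa using h2) h1

lemma min_le_add_s7 (g h : G) : min (v g) (v h) ≤ v (g + h) := by
  have := hv.min_le_sub g (-h)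
  rwa [hv.v_neg_s7, sub_neg_eq_add] at this

lemma v_add_eq {g h : G} (hlt : v g < v h) : v (g + h) = v g := by
  refine le_antisymm ?_ (by simpa [hlt.le] using hv.min_le_add_s7 g h)
  by_contra hc
  push_neg at hc
  have h2 := hv.min_le_sub (g + h) h
  simp only [add_sub_cancel_right] at h2
  exact absurd h2 (not_le.2 (lt_min hc hlt))

lemma v_sub_eq {g h : G} (hlt : v g < v h) : v (g - h) = v g := by
  rw [sub_eq_add_neg, hv.v_add_eq (by rwa [hv.v_neg_s7])]

end IsValuedGroup


set_option linter.unusedSectionVars false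


namespace VGAux
open IsValuedGroup

variable {G Γ : Type*} [AddCommGroup G] [LinearOrder Γ] [OrderTop Γ] {v : G → Γ}
variable {I : Type*} [LinearOrder I] {a : I → G} {i₀ : I} {γ : I → Γ}

lemma v_zsmul (hv : IsValuedGroup v)
    (hinv : ∀ (g : G) (n : ℕ), 0 < n → v (n • g) = v g) {k : ℤ} (hk : k ≠ 0) (g : G) :
    v (k • g) = v g := by
  rcases k.lt_or_lt_of_ne hk with h | h
  · have h1 : ((k.natAbs : ℤ)) = -k := by omega
    have : k • g = -((k.natAbs : ℤ) • g) := by rw [h1]; simp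
    rw [this, hv.v_neg_s7, natCast_zsmul, hinv _ _ (by omega)]
  · have h1 : ((k.natAbs : ℤ)) = k := by omega
    rw [← h1, natCast_zsmul, hinv _ _ (by omega)]

/-- eventually constant value `c` for the sequence `g + n • a i`. -/
def EvC (v : G → Γ) (a : I → G) (i₀ : I) (g : G) (n : ℤ) (c : Γ) : Prop :=
  ∃ i₁, i₀ ≤ i₁ ∧ ∀ i, i₁ ≤ i → v (g + n • a i) = c

/-- `z` is a pseudolimit of `n • a`. -/
def PLn (v : G → Γ) (a : I → G) (i₀ : I) (γ : I → Γ) (n : ℤ) (z : G) : Prop :=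
  ∃ i₁, i₀ ≤ i₁ ∧ ∀ i, i₁ ≤ i → v (n • a i - z) = γ i

open scoped Classical in
/-- The valuation on `G × ℤ` used to build the immediate extension. -/
noncomputable def w0 (v : G → Γ) (a : I → G) (i₀ : I) (d : ℕ) (y : G) (g : G) (n : ℤ) : Γ :=
  if h : ∃ c, EvC v a i₀ g n c then h.choose else v (g + (n / (d : ℤ)) • y)

section PC

variable (hv : IsValuedGroup v)
  (hinv : ∀ (g : G) (n : ℕ), 0 < n → v (n • g) = v g)
  (hγ : ∀ i j, i₀ ≤ i → i < j → v (a i - a j) = γ i)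
  (hγm : ∀ i j, i₀ ≤ i → i < j → γ i < γ j)

omit [OrderTop Γ] in
include hγm in
lemma gamma_mono (i j : I) (h0 : i₀ ≤ i) (hij : i ≤ j) : γ i ≤ γ j := by
  rcases eq_or_lt_of_le hij with rfl | h
  · exact le_rfl
  · exact (hγm i j h0 h).le

include hv hinv hγ in
lemma v_nsub {n : ℤ} (hn : n ≠ 0) {i j : I} (h0 : i₀ ≤ i) (hij : i < j) :
    v (n • a i - n • a j) = γ i := by
  rw [← smul_sub, v_zsmul hv hinv hn, hγ i j h0 hij]

include hv hinv hγ in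
/-- constancy below γ propagates. -/
lemma const_of_lt {g : G} {n : ℤ} {i₁ : I} (h0 : i₀ ≤ i₁)
    (hlt : v (g + n • a i₁) < γ i₁) :
    ∀ i, i₁ ≤ i → v (g + n • a i) = v (g + n • a i₁) := by
  intro i hi
  rcases eq_or_lt_of_le hi with rfl | h
  · rfl
  rcases eq_or_ne n 0 with rfl | hn
  · simp
  have key : g + n • a i = (g + n • a i₁) + (n • a i - n • a i₁) := by abel
  rw [key, hv.v_add_eq]
  rw [show n • a i - n • a i₁ = -(n • a i₁ - n • a i) by abel, hv.v_neg_s7,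
    v_nsub hv hinv hγ hn h0 h]
  exact hlt

include hγm in
lemma gamma_lt_top [NoMaxOrder I] {i : I} (h0 : i₀ ≤ i) : γ i < ⊤ := by
  obtain ⟨j, hj⟩ := exists_gt i
  exact lt_of_lt_of_le (hγm i j h0 hj) le_top

include hv hinv hγ hγm in
lemma eq_gamma_of_ge [NoMaxOrder I] {g : G} {n : ℤ} (hn : n ≠ 0) {i₁ : I} (h0 : i₀ ≤ i₁)
    (hge : ∀ i, i₁ ≤ i → γ i ≤ v (g + n • a i)) :
    ∀ i, i₁ ≤ i → v (g + n • a i) = γ i := by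
  intro i hi
  obtain ⟨j, hj⟩ := exists_gt i
  have e : v ((g + n • a i) - (g + n • a j)) = γ i := by
    rw [show (g + n • a i) - (g + n • a j) = n • a i - n • a j by abel]
    exact v_nsub hv hinv hγ hn (h0.trans hi) hj
  rcases eq_or_lt_of_le (hge i hi) with h | h
  · exact h.symm
  · have hm := hv.min_le_sub (g + n • a i) (g + n • a j)
    rw [e] at hm
    have : γ i < γ i := lt_of_lt_of_le
      (lt_min h (lt_of_lt_of_le (hγm i j (h0.trans hi) hj) (hge j (hi.trans hj.le)))) hm
    exact absurd this (lt_irrefl _)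

omit [OrderTop Γ] in
lemma evc_unique {g : G} {n : ℤ} {c c' : Γ} (h : EvC v a i₀ g n c)
    (h' : EvC v a i₀ g n c') : c = c' := by
  obtain ⟨i₁, -, h1⟩ := h
  obtain ⟨i₂, -, h2⟩ := h'
  rw [← h1 (max i₁ i₂) (le_max_left _ _), h2 (max i₁ i₂) (le_max_right _ _)]

omit [OrderTop Γ] in
lemma evc_zero (g : G) : EvC v a i₀ g 0 (v g) := ⟨i₀, le_rfl, fun i _ => by simp⟩

include hv hinv hγ hγm in
lemma exists_evc_or [NoMaxOrder I] {g : G} {n : ℤ} (hn : n ≠ 0) :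
    (∃ c, EvC v a i₀ g n c) ∨ ∀ i, i₀ ≤ i → v (g + n • a i) = γ i := by
  by_cases hx : ∃ i₁, i₀ ≤ i₁ ∧ v (g + n • a i₁) < γ i₁
  · obtain ⟨i₁, h0, hlt⟩ := hx
    exact Or.inl ⟨_, i₁, h0, const_of_lt hv hinv hγ h0 hlt⟩
  · push_neg at hx
    exact Or.inr (eq_gamma_of_ge hv hinv hγ hγm hn le_rfl hx)

include hv hinv hγ hγm in
lemma evc_lt [NoMaxOrder I] {g : G} {n : ℤ} {c : Γ} (hc : EvC v a i₀ g n c) (hn : n ≠ 0) :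
    ∃ i₂, i₀ ≤ i₂ ∧ ∀ i, i₂ ≤ i → v (g + n • a i) = c ∧ c < γ i := by
  obtain ⟨i₁, h01, hconst⟩ := hc
  have hx : ∃ i₂, i₁ ≤ i₂ ∧ v (g + n • a i₂) < γ i₂ := by
    by_contra hx
    push_neg at hx
    have := eq_gamma_of_ge hv hinv hγ hγm hn h01 hx
    obtain ⟨j, hj⟩ := exists_gt i₁
    have e1 : c = γ i₁ := by rw [← hconst i₁ le_rfl, this i₁ le_rfl]
    have e2 : c = γ j := by rw [← hconst j hj.le, this j hj.le]
    exact absurd (e1 ▸ e2 ▸ hγm i₁ j h01 hj) (lt_irrefl _)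
  obtain ⟨i₂, h12, hlt⟩ := hx
  refine ⟨i₂, h01.trans h12, fun i hi => ⟨hconst i (h12.trans hi), ?_⟩⟩
  rw [← hconst i₂ h12]
  exact lt_of_lt_of_le hlt (gamma_mono hγm i₂ i (h01.trans h12) hi)

section DY
variable (d : ℕ) (y : G)
variable (hdy : d ≠ 0 → PLn v a i₀ γ d y)
  (hy0 : d = 0 → y = 0)
  (hdiv : ∀ n : ℤ, n ≠ 0 → ∀ z : G, PLn v a i₀ γ n z → (d : ℤ) ∣ n)

omit [OrderTop Γ] in
lemma w0_evc {g : G} {n : ℤ} (h : ∃ c, EvC v a i₀ g n c) :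
    EvC v a i₀ g n (w0 v a i₀ d y g n) := by
  rw [w0, dif_pos h]
  exact h.choose_spec

omit [OrderTop Γ] in
lemma w0_zero (g : G) : w0 v a i₀ d y g 0 = v g :=
  evc_unique (w0_evc d y ⟨_, evc_zero g⟩) (evc_zero g)

include hv hinv hγ hγm hdy hdiv in
lemma w0_nc [NoMaxOrder I] {g : G} {n : ℤ} (hnc : ¬∃ c, EvC v a i₀ g n c) :
    n ≠ 0 ∧ ∃ m : ℤ, n = (d : ℤ) * m ∧ n / (d : ℤ) = m ∧
      w0 v a i₀ d y g n = v (g + m • y) ∧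
      (∀ i, i₀ ≤ i → γ i < v (g + m • y)) ∧
      (∀ i, i₀ ≤ i → v (g + n • a i) = γ i) := by
  have hn : n ≠ 0 := by rintro rfl; exact hnc ⟨_, evc_zero g⟩
  have hseq : ∀ i, i₀ ≤ i → v (g + n • a i) = γ i :=
    (exists_evc_or hv hinv hγ hγm hn).resolve_left hnc
  have hpl : PLn v a i₀ γ n (-g) :=
    ⟨i₀, le_rfl, fun i hi => by
      rw [show n • a i - (-g) = g + n • a i by abel]; exact hseq i hi⟩
  obtain ⟨m, hm⟩ := hdiv n hn _ hpl
  have hd0 : d ≠ 0 := by rintro rfl; simp at hm; exact hn hm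
  have hm0 : m ≠ 0 := by rintro rfl; simp at hm; exact hn hm
  obtain ⟨i₃, h3, hy3⟩ := hdy hd0
  have hy' : ∀ i, i₃ ≤ i → v (n • a i - m • y) = γ i := by
    intro i hi
    have e : n • a i - m • y = m • ((d : ℤ) • a i - y) := by
      rw [smul_sub, ← mul_smul, mul_comm, ← hm]
    rw [e, v_zsmul hv hinv hm0, hy3 i hi]
  have hge : ∀ i, i₀ ≤ i → γ i ≤ v (g + m • y) := by
    intro i hi
    have hj : γ (max i i₃) ≤ v (g + m • y) := by
      have e : g + m • y = (g + n • a (max i i₃)) - (n • a (max i i₃) - m • y) := by abel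
      have := hv.min_le_sub (g + n • a (max i i₃)) (n • a (max i i₃) - m • y)
      rw [← e, hseq _ (hi.trans (le_max_left _ _)), hy' _ (le_max_right _ _), min_self] at this
      exact this
    exact le_trans (gamma_mono hγm i _ hi (le_max_left _ _)) hj
  have hgt : ∀ i, i₀ ≤ i → γ i < v (g + m • y) := by
    intro i hi
    obtain ⟨j, hj⟩ := exists_gt i
    exact lt_of_lt_of_le (hγm i j hi hj) (hge j (hi.trans hj.le))
  have hdivq : n / (d : ℤ) = m := by
    rw [hm, Int.mul_ediv_cancel_left _ (by exact_mod_cast hd0)]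
  refine ⟨hn, m, hm, hdivq, ?_, hgt, hseq⟩
  rw [w0, dif_neg hnc, hdivq]

include hv hinv hγ hγm hdy hdiv in
lemma w0_up [NoMaxOrder I] {g : G} {n : ℤ} {c : Γ}
    (hc : ∃ i₃, i₀ ≤ i₃ ∧ ∀ i, i₃ ≤ i → c ≤ v (g + n • a i)) :
    c ≤ w0 v a i₀ d y g n := by
  obtain ⟨i₃, h3, hc3⟩ := hc
  by_cases hE : ∃ c', EvC v a i₀ g n c'
  · obtain ⟨i₁, h1, hconst⟩ := w0_evc d y (v := v) (a := a) (i₀ := i₀) hE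
    rw [← hconst (max i₁ i₃) (le_max_left _ _)]
    exact hc3 _ (le_max_right _ _)
  · obtain ⟨-, m, -, -, hw, hgt, hseq⟩ := w0_nc hv hinv hγ hγm d y hdy hdiv hE
    rw [hw]
    exact le_trans (hc3 (max i₀ i₃) (le_max_right _ _))
      (le_of_lt ((hseq _ (le_max_left _ _)) ▸ hgt _ (le_max_left _ _)))

include hv hinv hγ hγm hdy hdiv in
lemma w0_low [NoMaxOrder I] (g : G) (n : ℤ) :
    ∃ i₂, i₀ ≤ i₂ ∧ ∀ i, i₂ ≤ i → min (w0 v a i₀ d y g n) (γ i) ≤ v (g + n • a i) := by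
  by_cases hE : ∃ c', EvC v a i₀ g n c'
  · rcases eq_or_ne n 0 with rfl | hn
    · exact ⟨i₀, le_rfl, fun i _ => by
        rw [w0_zero]; simp⟩
    · obtain ⟨i₂, h2, hspec⟩ := evc_lt hv hinv hγ hγm (w0_evc d y hE) hn
      exact ⟨i₂, h2, fun i hi => (hspec i hi).1 ▸ min_le_left _ _⟩
  · obtain ⟨-, m, -, -, hw, hgt, hseq⟩ := w0_nc hv hinv hγ hγm d y hdy hdiv hE
    exact ⟨i₀, le_rfl, fun i hi => (hseq i hi) ▸ min_le_right _ _⟩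

include hv hinv hγ hγm hdy hdiv in
lemma w0_high [NoMaxOrder I] {g : G} {n : ℤ}
    (hh : ∀ i, i₀ ≤ i → γ i ≤ w0 v a i₀ d y g n) :
    (d : ℤ) ∣ n ∧ w0 v a i₀ d y g n = v (g + (n / (d : ℤ)) • y) := by
  by_cases hE : ∃ c', EvC v a i₀ g n c'
  · rcases eq_or_ne n 0 with rfl | hn
    · refine ⟨dvd_zero _, ?_⟩
      rw [w0_zero, Int.zero_ediv, zero_smul, add_zero]
    · obtain ⟨i₂, h2, hspec⟩ := evc_lt hv hinv hγ hγm (w0_evc d y hE) hn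
      exact absurd (hh i₂ h2) (not_le.2 (hspec i₂ le_rfl).2)
  · obtain ⟨-, m, hm, hdq, hw, -, -⟩ := w0_nc hv hinv hγ hγm d y hdy hdiv hE
    exact ⟨⟨m, hm⟩, by rw [hw, hdq]⟩

include hv hinv hγ hγm hdy hdiv in
lemma w0_msub [NoMaxOrder I] (g g' : G) (n n' : ℤ) :
    min (w0 v a i₀ d y g n) (w0 v a i₀ d y g' n') ≤
      w0 v a i₀ d y (g - g') (n - n') := by
  set δ := w0 v a i₀ d y g n with hδ
  set δ' := w0 v a i₀ d y g' n' with hδ'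
  obtain ⟨i₂, h2, L⟩ := w0_low hv hinv hγ hγm d y hdy hdiv g n
  obtain ⟨i₂', h2', L'⟩ := w0_low hv hinv hγ hγm d y hdy hdiv g' n'
  have hDi : ∀ i : I, (g + n • a i) - (g' + n' • a i) = (g - g') + (n - n') • a i := by
    intro i; rw [sub_smul]; abel
  have key : ∀ i, max i₂ i₂' ≤ i →
      min (min δ δ') (γ i) ≤ v ((g - g') + (n - n') • a i) := by
    intro i hi
    have h1 := hv.min_le_sub (g + n • a i) (g' + n' • a i)
    rw [hDi i] at h1
    refine le_trans (le_min ?_ ?_) h1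
    · exact le_trans (min_le_min (min_le_left δ δ') le_rfl)
        (L i (le_trans (le_max_left _ _) hi))
    · exact le_trans (min_le_min (min_le_right δ δ') le_rfl)
        (L' i (le_trans (le_max_right _ _) hi))
  by_cases hA : ∃ i₅, i₀ ≤ i₅ ∧ min δ δ' < γ i₅
  · obtain ⟨i₅, h5, hlt5⟩ := hA
    refine w0_up hv hinv hγ hγm d y hdy hdiv
      ⟨max i₅ (max i₂ i₂'), le_trans h5 (le_max_left _ _), fun i hi => ?_⟩
    have : min (min δ δ') (γ i) = min δ δ' :=
      min_eq_left (le_of_lt (lt_of_lt_of_le hlt5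
        (gamma_mono hγm i₅ i h5 (le_trans (le_max_left _ _) hi))))
    rw [← this]
    exact key i (le_trans (le_max_right _ _) hi)
  · push_neg at hA
    have hAδ : ∀ i, i₀ ≤ i → γ i ≤ δ := fun i hi =>
      le_trans (hA i hi) (min_le_left _ _)
    have hAδ' : ∀ i, i₀ ≤ i → γ i ≤ δ' := fun i hi =>
      le_trans (hA i hi) (min_le_right _ _)
    obtain ⟨hdvd, hXw⟩ := w0_high hv hinv hγ hγm d y hdy hdiv hAδ
    obtain ⟨hdvd', hXw'⟩ := w0_high hv hinv hγ hγm d y hdy hdiv hAδ'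
    set m : ℤ := n / (d : ℤ) with hmdef
    set m' : ℤ := n' / (d : ℤ) with hmdef'
    set X : G := g + m • y with hXdef
    set X' : G := g' + m' • y with hXdef'
    have hXX' : X - X' = (g - g') + (m - m') • y := by rw [hXdef, hXdef', sub_smul]; abel
    rcases eq_or_ne n n' with rfl | hnn
    · have hmm : m = m' := rfl
      have e0 : n - n = 0 := sub_self n
      rw [e0]
      rw [w0_zero]
      have : g - g' = X - X' := by rw [hXX', hmm, sub_self, zero_smul, add_zero]
      rw [this, hδ, hδ'] at *
      rw [hXw, hXw']
      exact hv.min_le_sub X X'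
    · have hd0 : d ≠ 0 := by
        rintro rfl
        simp only [Nat.cast_zero, zero_dvd_iff] at hdvd hdvd'
        exact hnn (hdvd.trans hdvd'.symm)
      have hmm : m ≠ m' := by
        intro h
        apply hnn
        rw [← Int.mul_ediv_cancel' hdvd, ← Int.mul_ediv_cancel' hdvd', ← hmdef, ← hmdef', h]
      have hk0 : m - m' ≠ 0 := sub_ne_zero.2 hmm
      have hnd : n - n' = (d : ℤ) * (m - m') := by
        rw [mul_sub, Int.mul_ediv_cancel' hdvd, Int.mul_ediv_cancel' hdvd']
      obtain ⟨i₄, h4, hy4⟩ := hdy hd0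
      have hXXge : ∀ i, i₀ ≤ i → γ i < v (X - X') := by
        intro i hi
        obtain ⟨j, hj⟩ := exists_gt i
        refine lt_of_lt_of_le (hγm i j hi hj) ?_
        refine le_trans ?_ (hv.min_le_sub X X')
        have := hA j (hi.trans hj.le)
        rw [hδ, hδ', hXw, hXw'] at this
        exact this
      have hDseq : ∀ i, max i₀ i₄ ≤ i → v ((g - g') + (n - n') • a i) = γ i := by
        intro i hi
        have e : (g - g') + (n - n') • a i = (m - m') • ((d : ℤ) • a i - y) + (X - X') := by
          rw [hXX', smul_sub, ← mul_smul, mul_comm (m - m') ((d : ℤ)), ← hnd]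
          abel
        rw [e, hv.v_add_eq]
        · rw [v_zsmul hv hinv hk0, hy4 i (le_trans (le_max_right _ _) hi)]
        · rw [v_zsmul hv hinv hk0, hy4 i (le_trans (le_max_right _ _) hi)]
          exact hXXge i (le_trans (le_max_left _ _) hi)
      have hNC : ¬∃ c, EvC v a i₀ (g - g') (n - n') c := by
        rintro ⟨c, i₁, h1, hc⟩
        obtain ⟨j, hj⟩ := exists_gt (max i₁ (max i₀ i₄))
        have e1 : c = γ (max i₁ (max i₀ i₄)) := by
          rw [← hc _ (le_max_left _ _), hDseq _ (le_max_right _ _)]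
        have e2 : c = γ j := by
          rw [← hc j ((le_max_left _ _).trans hj.le),
            hDseq j ((le_max_right _ _).trans hj.le)]
        have hlt : γ (max i₁ (max i₀ i₄)) < γ j :=
          hγm _ j (le_trans (le_max_left i₀ i₄) (le_max_right i₁ _)) hj
        rw [← e1, ← e2] at hlt
        exact lt_irrefl c hlt
      obtain ⟨-, m'', hm'', hdq, hw, -, -⟩ :=
        w0_nc hv hinv hγ hγm d y hdy hdiv hNC
      have hm''e : m'' = m - m' := by
        have : (d : ℤ) * m'' = (d : ℤ) * (m - m') := by rw [← hm'', hnd]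
        exact mul_left_cancel₀ (by exact_mod_cast hd0) this
      rw [hδ, hδ', hw, hm''e, ← hXX', hXw, hXw']
      exact hv.min_le_sub X X'

omit [OrderTop Γ] in
include hγm in
lemma not_evc_of_seq [NoMaxOrder I] {g : G} {n : ℤ} {i₅ : I} (h5 : i₀ ≤ i₅)
    (hs : ∀ i, i₅ ≤ i → v (g + n • a i) = γ i) : ¬∃ c, EvC v a i₀ g n c := by
  rintro ⟨c, i₁, h1, hc⟩
  obtain ⟨j, hj⟩ := exists_gt (max i₁ i₅)
  have e1 : c = γ (max i₁ i₅) := by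
    rw [← hc _ (le_max_left _ _), hs _ (le_max_right _ _)]
  have e2 : c = γ j := by
    rw [← hc j ((le_max_left _ _).trans hj.le), hs j ((le_max_right _ _).trans hj.le)]
  have hlt : γ (max i₁ i₅) < γ j := hγm _ j (h5.trans (le_max_right i₁ i₅)) hj
  rw [← e1, ← e2] at hlt
  exact lt_irrefl c hlt

include hv hinv hγ hγm hdy hy0 hdiv in
lemma w0_eq_top [NoMaxOrder I] (g : G) (n : ℤ) :
    w0 v a i₀ d y g n = ⊤ ↔ ∃ k : ℤ, k • ((y, -(d : ℤ)) : G × ℤ) = (g, n) := by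
  constructor
  · intro htop
    by_cases hE : ∃ c, EvC v a i₀ g n c
    · obtain ⟨i₁, h1, hconst⟩ := w0_evc d y (v := v) (a := a) (i₀ := i₀) hE
      rw [htop] at hconst
      have hz : ∀ i, i₁ ≤ i → g + n • a i = 0 := fun i hi =>
        (hv.eq_top_iff _).1 (hconst i hi)
      have hn : n = 0 := by
        by_contra hn
        obtain ⟨j, hj⟩ := exists_gt i₁
        have : n • a i₁ - n • a j = 0 := by
          have e1 := hz i₁ le_rfl
          have e2 := hz j hj.le
          have : g + n • a i₁ - (g + n • a j) = 0 := by rw [e1, e2]; simp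
          rw [show g + n • a i₁ - (g + n • a j) = n • a i₁ - n • a j by abel] at this
          exact this
        have := v_nsub hv hinv hγ hn h1 hj
        rw [‹n • a i₁ - n • a j = 0›, hv.v_zero_s7] at this
        exact absurd this.symm (ne_of_lt (gamma_lt_top hγm h1))
      subst hn
      have hg : g = 0 := by simpa using hz i₁ le_rfl
      exact ⟨0, by simp [hg]; rfl⟩
    · obtain ⟨hn, m, hm, hdq, hw, -, -⟩ := w0_nc hv hinv hγ hγm d y hdy hdiv hE
      rw [hw] at htop
      have hX : g + m • y = 0 := (hv.eq_top_iff _).1 htop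
      refine ⟨-m, ?_⟩
      rw [Prod.smul_mk, Prod.mk.injEq]
      constructor
      · rw [neg_smul]
        exact neg_eq_of_add_eq_zero_left hX
      · rw [smul_eq_mul, hm]; ring
  · rintro ⟨k, hk⟩
    rw [Prod.smul_mk, Prod.mk.injEq] at hk
    obtain ⟨hk1, hk2⟩ := hk
    rw [smul_eq_mul] at hk2
    rcases eq_or_ne k 0 with rfl | hk0
    · rw [zero_smul] at hk1
      rw [zero_mul] at hk2
      rw [← hk1, ← hk2, w0_zero, hv.v_zero_s7]
    · rcases eq_or_ne d 0 with rfl | hd0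
      · have hy := hy0 rfl
        subst hy
        rw [smul_zero] at hk1
        simp only [Nat.cast_zero, neg_zero, mul_zero] at hk2
        rw [← hk1, ← hk2, w0_zero, hv.v_zero_s7]
      · have hn : n = (-k) * (d : ℤ) := by rw [← hk2]; ring
        obtain ⟨i₄, h4, hy4⟩ := hdy hd0
        have hseq : ∀ i, i₄ ≤ i → v (g + n • a i) = γ i := by
          intro i hi
          have e : g + n • a i = (-k) • ((d : ℤ) • a i - y) := by
            rw [← hk1, smul_sub, ← mul_smul, ← hn, neg_smul]
            abel
          rw [e, v_zsmul hv hinv (neg_ne_zero.2 hk0), hy4 i hi]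
        have hNC := not_evc_of_seq hγm h4 hseq
        rw [w0, dif_neg hNC]
        have hdq : n / (d : ℤ) = -k :=  by
          rw [hn, Int.mul_ediv_cancel _ (by exact_mod_cast hd0)]
        rw [hdq, ← hk1]
        have : k • y + (-k) • y = 0 := by rw [neg_smul]; abel
        rw [this, hv.v_zero_s7]

include hv hinv hγ hγm hdy hdiv in
lemma w0_values [NoMaxOrder I] {g : G} {n : ℤ} (h : w0 v a i₀ d y g n ≠ ⊤) :
    ∃ g₀ : G, g₀ ≠ 0 ∧ v g₀ = w0 v a i₀ d y g n := by
  by_cases hE : ∃ c, EvC v a i₀ g n c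
  · obtain ⟨i₁, h1, hconst⟩ := w0_evc d y (v := v) (a := a) (i₀ := i₀) hE
    refine ⟨g + n • a i₁, ?_, hconst i₁ le_rfl⟩
    intro h0
    exact h (by rw [← hconst i₁ le_rfl, h0, hv.v_zero_s7])
  · obtain ⟨hn, m, hm, hdq, hw, -, -⟩ := w0_nc hv hinv hγ hγm d y hdy hdiv hE
    refine ⟨g + m • y, ?_, hw.symm⟩
    intro h0
    exact h (by rw [hw, h0, hv.v_zero_s7])

include hv hinv hγ hγm hdy hy0 hdiv in
lemma w0_approx [NoMaxOrder I] {g : G} {n : ℤ} {c : Γ} (hc : c ≠ ⊤)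
    (hle : c ≤ w0 v a i₀ d y g n) :
    ∃ g₀ : G, c ≤ v g₀ ∧ c < w0 v a i₀ d y (g - g₀) n := by
  by_cases hE : ∃ c', EvC v a i₀ g n c'
  · rcases eq_or_ne n 0 with rfl | hn
    · refine ⟨g, ?_, ?_⟩
      · rwa [w0_zero] at hle
      · rw [sub_self, w0_zero, hv.v_zero_s7]
        exact lt_top_iff_ne_top.2 hc
    · obtain ⟨i₂, h2, hspec⟩ := evc_lt hv hinv hγ hγm (w0_evc d y hE) hn
      refine ⟨g + n • a i₂, ?_, ?_⟩
      · rw [(hspec i₂ le_rfl).1]; exact hle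
      · have hE2 : EvC v a i₀ (g - (g + n • a i₂)) n (γ i₂) := by
          obtain ⟨j, hj⟩ := exists_gt i₂
          refine ⟨j, h2.trans hj.le, fun i hi => ?_⟩
          have e : g - (g + n • a i₂) + n • a i = -(n • a i₂ - n • a i) := by abel
          rw [e, hv.v_neg_s7, v_nsub hv hinv hγ hn h2 (lt_of_lt_of_le hj hi)]
        rw [evc_unique (w0_evc d y ⟨_, hE2⟩) hE2]
        exact lt_of_le_of_lt hle (hspec i₂ le_rfl).2
  · obtain ⟨hn, m, hm, hdq, hw, -, -⟩ := w0_nc hv hinv hγ hγm d y hdy hdiv hE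
    refine ⟨g + m • y, by rw [← hw]; exact hle, ?_⟩
    have htop : w0 v a i₀ d y (g - (g + m • y)) n = ⊤ := by
      rw [w0_eq_top hv hinv hγ hγm d y hdy hy0 hdiv]
      refine ⟨-m, ?_⟩
      rw [Prod.smul_mk, Prod.mk.injEq]
      constructor
      · rw [neg_smul]; abel
      · rw [smul_eq_mul, hm]; ring
    rw [htop]
    exact lt_top_iff_ne_top.2 hc

include hv hinv hγ hγm hdy hy0 hdiv in
lemma w0_shift [NoMaxOrder I] {g : G} {n : ℤ} {q₁ : G} {q₂ : ℤ}
    (hq : ∃ k : ℤ, k • ((y, -(d : ℤ)) : G × ℤ) = (q₁, q₂)) :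
    w0 v a i₀ d y (g - q₁) (n - q₂) = w0 v a i₀ d y g n := by
  have htop : w0 v a i₀ d y q₁ q₂ = ⊤ :=
    (w0_eq_top hv hinv hγ hγm d y hdy hy0 hdiv q₁ q₂).2 hq
  have htop' : w0 v a i₀ d y (-q₁) (-q₂) = ⊤ := by
    rw [w0_eq_top hv hinv hγ hγm d y hdy hy0 hdiv]
    obtain ⟨k, hk⟩ := hq
    exact ⟨-k, by rw [neg_smul, hk, Prod.neg_mk]⟩
  have h1 := w0_msub hv hinv hγ hγm d y hdy hdiv g q₁ n q₂
  rw [htop] at h1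
  simp only [le_top, min_eq_left] at h1
  have h2 := w0_msub hv hinv hγ hγm d y hdy hdiv (g - q₁) (-q₁) (n - q₂) (-q₂)
  rw [htop'] at h2
  simp only [le_top, min_eq_left] at h2
  rw [show g - q₁ - -q₁ = g by abel, show n - q₂ - -q₂ = n by ring] at h2
  exact le_antisymm h2 h1

end DY

include hv hinv hγ hγm in
lemma exists_dy [NoMaxOrder I] (hno : ¬∃ x : G, IsPseudoLimit v a x) :
    ∃ (d : ℕ) (y : G), d ≠ 1 ∧ (d ≠ 0 → PLn v a i₀ γ d y) ∧ (d = 0 → y = 0) ∧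
      (∀ n : ℤ, n ≠ 0 → ∀ z : G, PLn v a i₀ γ n z → (d : ℤ) ∣ n) := by
  have habs : ∀ (n : ℤ), n ≠ 0 → ∀ z : G, PLn v a i₀ γ n z →
      (n.natAbs ≠ 0 ∧ ∃ z' : G, PLn v a i₀ γ (n.natAbs : ℤ) z') := by
    intro n hn z hz
    refine ⟨by simpa using hn, ?_⟩
    rcases Int.natAbs_eq n with he | he
    · exact ⟨z, by rw [← he]; exact hz⟩
    · refine ⟨-z, ?_⟩
      obtain ⟨i₁, h1, hz1⟩ := hz
      refine ⟨i₁, h1, fun i hi => ?_⟩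
      have e : (n.natAbs : ℤ) • a i - (-z) = -(n • a i - z) := by
        rw [show ((n.natAbs : ℤ)) = -n by omega]
        rw [neg_smul]; abel
      rw [e, hv.v_neg_s7, hz1 i hi]
  by_cases hD : ∃ n : ℕ, n ≠ 0 ∧ ∃ z : G, PLn v a i₀ γ (n : ℤ) z
  · classical
    set d := Nat.find hD with hddef
    obtain ⟨hd0, y, hy⟩ := Nat.find_spec hD
    have hd1 : d ≠ 1 := by
      intro h1
      apply hno
      obtain ⟨i₁, h1', hy1⟩ := hy
      refine ⟨y, i₁, fun i j hi hij => ?_⟩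
      have := hy1 i hi
      rw [← hddef, h1] at this
      simp only [Nat.cast_one, one_smul] at this
      rw [this, hγ i j (h1'.trans hi) hij]
    refine ⟨d, y, hd1, fun _ => hy, fun h => absurd h hd0, ?_⟩
    intro n hn z hz
    -- euclidean division
    set q := n / (d : ℤ) with hq
    set r := n % (d : ℤ) with hr
    have hdpos : 0 < (d : ℤ) := by exact_mod_cast Nat.pos_of_ne_zero hd0
    have hnr : n = (d : ℤ) * q + r := (Int.mul_ediv_add_emod n (d : ℤ)).symm
    rcases eq_or_ne r 0 with hr0 | hr0
    · exact Int.dvd_of_emod_eq_zero hr0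
    · exfalso
      obtain ⟨i₁, h1, hz1⟩ := id hz
      have hplr : PLn v a i₀ γ r (z - q • y) := by
        rcases eq_or_ne q 0 with hq0 | hq0
        · have : r = n := by rw [hnr, hq0]; ring
          rw [this, hq0]
          simpa using hz
        · obtain ⟨i₄, h4, hy4⟩ := hy
          have hge : ∀ i, max i₁ i₄ ≤ i → γ i ≤ v ((-(z - q • y)) + r • a i) := by
            intro i hi
            have e : (-(z - q • y)) + r • a i
                = (n • a i - z) - q • ((d : ℤ) • a i - y) := by
              rw [smul_sub, ← mul_smul, show (q * (d : ℤ)) • a i = (n - r) • a i by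
                rw [hnr]; ring_nf]
              rw [sub_smul]
              abel
            rw [e]
            have := hv.min_le_sub (n • a i - z) (q • ((d : ℤ) • a i - y))
            rw [hz1 i ((le_max_left _ _).trans hi),
              v_zsmul hv hinv hq0, hy4 i ((le_max_right _ _).trans hi), min_self] at this
            exact this
          have := eq_gamma_of_ge hv hinv hγ hγm hr0 (h1.trans (le_max_left i₁ i₄)) hge
          refine ⟨max i₁ i₄, h1.trans (le_max_left _ _), fun i hi => ?_⟩
          rw [show r • a i - (z - q • y) = (-(z - q • y)) + r • a i by abel]
          exact this i hi
      have hrpos : 0 < r := lt_of_le_of_ne (Int.emod_nonneg n (ne_of_gt hdpos)) (Ne.symm hr0)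
      have hrd : r < (d : ℤ) := Int.emod_lt_of_pos n hdpos
      have hmem : r.toNat ≠ 0 ∧ ∃ z' : G, PLn v a i₀ γ (r.toNat : ℤ) z' := by
        refine ⟨by omega, ⟨z - q • y, ?_⟩⟩
        rw [show ((r.toNat : ℤ)) = r by omega]
        exact hplr
      have := Nat.find_min' hD hmem
      omega
  · refine ⟨0, 0, by omega, fun h => absurd rfl h, fun _ => rfl, ?_⟩
    intro n hn z hz
    exact absurd ⟨n.natAbs, habs n hn z hz⟩ hD

include hv in
lemma exists_gamma [NoMaxOrder I] (hca : IsPseudoCauchy v a) :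
    ∃ (i₀ : I) (γ : I → Γ), (∀ i j, i₀ ≤ i → i < j → v (a i - a j) = γ i) ∧
      (∀ i j, i₀ ≤ i → i < j → γ i < γ j) := by
  obtain ⟨i₀, hpc⟩ := hca
  have key : ∀ i j j', i₀ ≤ i → i < j → i < j' → v (a i - a j) = v (a i - a j') := by
    have half : ∀ i j k, i₀ ≤ i → i < j → j < k → v (a i - a k) = v (a i - a j) := by
      intro i j k hi hj hk
      rw [show a i - a k = (a i - a j) + (a j - a k) by abel]
      exact hv.v_add_eq (hpc i j k hi hj hk)
    intro i j j' hi hj hj'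
    obtain ⟨k, hk⟩ := exists_gt (max j j')
    rw [← half i j k hi hj ((le_max_left _ _).trans_lt hk),
      ← half i j' k hi hj' ((le_max_right _ _).trans_lt hk)]
  refine ⟨i₀, fun i => v (a i - a (Classical.choose (exists_gt i))), ?_, ?_⟩
  · intro i j hi hj
    exact key i j _ hi hj (Classical.choose_spec (exists_gt i))
  · intro i j hi hj
    dsimp only
    rw [key i (Classical.choose (exists_gt i)) j hi (Classical.choose_spec (exists_gt i)) hj]
    exact hpc i j _ hi hj (Classical.choose_spec (exists_gt j))

end PC

lemma not_max {G Γ : Type u} [AddCommGroup G] [LinearOrder Γ] [OrderTop Γ] {v : G → Γ}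
    (hv : IsValuedGroup v) (hinv : ∀ (g : G) (n : ℕ), 0 < n → v (n • g) = v g)
    {I : Type u} [LinearOrder I] [NoMaxOrder I]
    (a : I → G) (hca : IsPseudoCauchy v a) (hno : ¬∃ x : G, IsPseudoLimit v a x) :
    ¬ IsMaximal v := by
  obtain ⟨i₀, γ, hγ, hγm⟩ := exists_gamma hv hca
  obtain ⟨d, y, hd1, hdy, hy0, hdiv⟩ := exists_dy hv hinv hγ hγm hno
  intro hmax
  set Z : AddSubgroup (G × ℤ) := AddSubgroup.zmultiples ((y, -(d : ℤ)) : G × ℤ) with hZ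
  have hmemZ : ∀ p : G × ℤ, p ∈ Z ↔ ∃ k : ℤ, k • ((y, -(d : ℤ)) : G × ℤ) = p := fun p =>
    AddSubgroup.mem_zmultiples_iff
  have hresp : ∀ p q : G × ℤ, QuotientAddGroup.leftRel Z p q →
      w0 v a i₀ d y p.1 p.2 = w0 v a i₀ d y q.1 q.2 := by
    intro p q hpq
    have hpq' : -p + q ∈ Z := QuotientAddGroup.leftRel_apply.mp hpq
    obtain ⟨k, hk⟩ := (hmemZ _).1 hpq'
    have hk' : k • ((y, -(d : ℤ)) : G × ℤ) = (q.1 - p.1, q.2 - p.2) := by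
      rw [hk, Prod.ext_iff]
      constructor
      · simp [sub_eq_neg_add]
      · simp [sub_eq_neg_add]
    have := w0_shift hv hinv hγ hγm d y hdy hy0 hdiv
      (g := q.1) (n := q.2) (q₁ := q.1 - p.1) (q₂ := q.2 - p.2) ⟨k, hk'⟩
    rw [show q.1 - (q.1 - p.1) = p.1 by abel, show q.2 - (q.2 - p.2) = p.2 by ring] at this
    exact this
  let Q := (G × ℤ) ⧸ Z
  let wq : Q → Γ := fun x => Quotient.liftOn' x (fun p => w0 v a i₀ d y p.1 p.2) hresp
  have hwq : ∀ p : G × ℤ, wq (QuotientAddGroup.mk p) = w0 v a i₀ d y p.1 p.2 :=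
    fun p => rfl
  let f : G →+ Q := (QuotientAddGroup.mk' Z).comp (AddMonoidHom.inl G ℤ)
  have hf : ∀ g : G, f g = QuotientAddGroup.mk (g, 0) := fun g => rfl
  have hwf : ∀ g : G, wq (f g) = v g := by
    intro g
    rw [hf, hwq, w0_zero]
  have hZiff : ∀ p : G × ℤ, (QuotientAddGroup.mk p : Q) = 0 ↔
      ∃ k : ℤ, k • ((y, -(d : ℤ)) : G × ℤ) = p := by
    intro p
    rw [QuotientAddGroup.eq_zero_iff, hmemZ]
  have htop : ∀ p : G × ℤ, wq (QuotientAddGroup.mk p) = ⊤ ↔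
      (QuotientAddGroup.mk p : Q) = 0 := by
    intro p
    rw [hwq, hZiff, w0_eq_top hv hinv hγ hγm d y hdy hy0 hdiv]
  have hfzero : ∀ g : G, f g = 0 → g = 0 := by
    intro g hg
    rw [hf, hZiff] at hg
    obtain ⟨k, hk⟩ := hg
    have hk1 : k • y = g := congrArg Prod.fst hk
    have hk2 : k * (-(d : ℤ)) = 0 := congrArg Prod.snd hk
    rcases eq_or_ne d 0 with hd | hd
    · rw [← hk1, hy0 hd, smul_zero]
    · have : k = 0 := by
        have : (d : ℤ) ≠ 0 := by exact_mod_cast hd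
        rcases mul_eq_zero.1 hk2 with h | h
        · exact h
        · exact absurd (neg_eq_zero.1 h) this
      rw [← hk1, this, zero_smul]
  have finj : Function.Injective f := (injective_iff_map_eq_zero f).2 hfzero
  have hw : IsValuedGroup wq := by
    refine ⟨?_, ?_, ?_⟩
    · intro c
      obtain ⟨g, rfl⟩ := hv.surjective c
      exact ⟨f g, hwf g⟩
    · intro x
      obtain ⟨p, rfl⟩ := QuotientAddGroup.mk_surjective x
      exact htop p
    · intro x x'
      obtain ⟨p, rfl⟩ := QuotientAddGroup.mk_surjective x
      obtain ⟨q, rfl⟩ := QuotientAddGroup.mk_surjective x'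
      rw [← QuotientAddGroup.mk_sub, hwq, hwq, hwq, Prod.fst_sub, Prod.snd_sub]
      exact w0_msub hv hinv hγ hγm d y hdy hdiv p.1 q.1 p.2 q.2
  have himm : IsImmediateIn wq (Set.range f) Set.univ := by
    constructor
    · intro k _ hk0
      obtain ⟨p, rfl⟩ := QuotientAddGroup.mk_surjective k
      have hne : w0 v a i₀ d y p.1 p.2 ≠ ⊤ := by
        intro h
        exact hk0 ((htop p).1 (by rw [hwq]; exact h))
      obtain ⟨g₀, hg₀ne, hg₀v⟩ := w0_values hv hinv hγ hγm d y hdy hdiv hne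
      refine ⟨f g₀, ⟨g₀, rfl⟩, ?_, ?_⟩
      · intro h
        exact hg₀ne (hfzero g₀ h)
      · rw [hwf, hwq, hg₀v]
    · intro c hc k _ hck
      obtain ⟨g₁, ⟨g₁', rfl⟩, hg1ne, hg1v⟩ := hc
      obtain ⟨p, rfl⟩ := QuotientAddGroup.mk_surjective k
      have hcne : c ≠ ⊤ := by
        rw [← hg1v, hwf]
        intro h
        exact hg1ne (by rw [(hv.eq_top_iff g₁').1 h, map_zero])
      rw [hwq] at hck
      obtain ⟨g₀, h1, h2⟩ := w0_approx hv hinv hγ hγm d y hdy hy0 hdiv hcne hck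
      refine ⟨f g₀, ⟨g₀, rfl⟩, by rw [hwf]; exact h1, ?_⟩
      rw [hf, ← QuotientAddGroup.mk_sub, hwq, Prod.fst_sub, Prod.snd_sub]
      simpa using h2
  have hsurj := hmax Q inferInstance wq hw f finj hwf himm
  obtain ⟨g, hg⟩ := hsurj (QuotientAddGroup.mk ((0 : G), (1 : ℤ)))
  rw [hf] at hg
  have hmem : -((g, (0:ℤ)) : G × ℤ) + ((0 : G), (1 : ℤ)) ∈ Z := QuotientAddGroup.eq.mp hg
  obtain ⟨k, hk⟩ := (hmemZ _).1 hmem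
  have hk2 : k * (-(d : ℤ)) = 1 := by
    have := congrArg Prod.snd hk
    simpa using this
  have hdvd : (d : ℤ) ∣ 1 := ⟨-k, by linarith⟩
  have : d ∣ 1 := by exact_mod_cast hdvd
  exact hd1 (Nat.dvd_one.mp this)

lemma max_of_pc {G Γ : Type u} [AddCommGroup G] [LinearOrder Γ] [OrderTop Γ] {v : G → Γ}
    (hv : IsValuedGroup v) (hpc : IsPseudoComplete v) : IsMaximal v := by
  intro H _ w hw f finj hwf himm
  classical
  by_contra hns
  rw [Function.Surjective] at hns
  push_neg at hns
  obtain ⟨h₁, hh₁⟩ := hns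
  -- approximation step
  have hstep : ∀ g : G, ∃ g' : G, w (h₁ - f g) < w (h₁ - f g') := by
    intro g
    have hne : h₁ - f g ≠ 0 := by
      intro h
      exact hh₁ g (by rw [← sub_eq_zero]; rw [← neg_sub]; rw [h, neg_zero])
    obtain ⟨g₁, hg₁mem, hg1ne, hg1v⟩ := himm.1 (h₁ - f g) trivial hne
    obtain ⟨g₂, hg₂mem, hg₂⟩ := himm.2 (w (h₁ - f g))
      ⟨g₁, hg₁mem, hg1ne, hg1v⟩ (h₁ - f g) trivial le_rfl
    obtain ⟨g₂', rfl⟩ := hg₂mem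
    refine ⟨g + g₂', ?_⟩
    have e : h₁ - f (g + g₂') = (h₁ - f g) - f g₂' := by rw [map_add]; abel
    rw [e]
    exact hg₂.2
  -- transfinite recursion
  let F : Ordinal.{u} → G := Ordinal.lt_wf.fix fun o IH =>
    if hx : ∃ g : G, ∀ o' (h' : o' < o), w (h₁ - f (IH o' h')) < w (h₁ - f g) then
      hx.choose else 0
  have hFeq : ∀ o : Ordinal.{u}, F o =
      if hx : ∃ g : G, ∀ o' (_ : o' < o), w (h₁ - f (F o')) < w (h₁ - f g) then
        hx.choose else 0 := fun o => WellFounded.fix_eq _ _ o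
  set β : Ordinal.{u} → Γ := fun o => w (h₁ - f (F o)) with hβ
  set Succ : Ordinal.{u} → Prop :=
    fun o => ∃ g : G, ∀ o' (_ : o' < o), β o' < w (h₁ - f g) with hSucc
  have hFspec : ∀ o, Succ o → ∀ o', o' < o → β o' < β o := by
    intro o ho o' h'
    have := hFeq o
    rw [dif_pos ho] at this
    have h2 := ho.choose_spec o' h'
    rw [hβ]
    simp only
    rw [this]
    exact h2
  by_cases hall : ∀ o : Ordinal.{u}, Succ o
  · have hmono : StrictMono β := fun p q hpq => hFspec q (hall q) p hpq
    exact not_injective_of_ordinal β hmono.injective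
  · push_neg at hall
    obtain ⟨ob, hob, hmin⟩ := Ordinal.lt_wf.has_min {o | ¬ Succ o} (by
      obtain ⟨o, ho⟩ := hall; exact ⟨o, ho⟩)
    have hsucc : ∀ o', o' < ob → Succ o' := by
      intro o' h'
      by_contra hbc
      exact hmin o' hbc h'
    have hβm : ∀ p q, p < q → q < ob → β p < β q := fun p q hpq hq =>
      hFspec q (hsucc q hq) p hpq
    have h0 : ob ≠ 0 := by
      intro h
      exact hob ⟨0, fun o' h' => absurd (h ▸ h') (zero_le : (0 : Ordinal) ≤ o').not_gt⟩
    have hlim : ∀ s, s < ob → s + 1 < ob := by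
      intro s hs
      rcases lt_or_eq_of_le (show s + 1 ≤ ob by
        rw [Ordinal.add_one_eq_succ]; exact Order.succ_le_of_lt hs) with h | h
      · exact h
      · exfalso
        obtain ⟨g', hg'⟩ := hstep (F s)
        refine hob ⟨g', fun o' h' => ?_⟩
        rw [← h, Ordinal.add_one_eq_succ, Order.lt_succ_iff] at h'
        rcases lt_or_eq_of_le h' with h'' | h''
        · exact lt_trans (hβm o' s h'' hs) hg'
        · rw [h'']; exact hg'
    haveI hne : Nonempty ob.ToType := Ordinal.toType_nonempty_iff_ne_zero.2 h0
    haveI hnm : NoMaxOrder ob.ToType := Ordinal.toType_noMax_of_succ_lt (fun a ha => by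
      rw [← Ordinal.add_one_eq_succ]; exact hlim a ha)
    set e := @Ordinal.ToType.mk ob with he
    set b : ob.ToType → G := fun t => F ((e.symm t) : Ordinal) with hb
    set βt : ob.ToType → Γ := fun t => w (h₁ - f (b t)) with hβt
    have hordlt : ∀ t t' : ob.ToType, t < t' → ((e.symm t : Ordinal) < (e.symm t' : Ordinal)) := by
      intro t t' h
      exact (e.symm.lt_iff_lt.2 h : (e.symm t : Set.Iio ob) < e.symm t')
    have hβtm : ∀ t t' : ob.ToType, t < t' → βt t < βt t' := by
      intro t t' h
      exact hβm _ _ (hordlt t t' h) (e.symm t').2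
    have hval : ∀ t t' : ob.ToType, t < t' → v (b t - b t') = βt t := by
      intro t t' h
      have e1 : f (b t) - f (b t') = (h₁ - f (b t')) - (h₁ - f (b t)) := by abel
      have e2 : v (b t - b t') = w (f (b t) - f (b t')) := by
        rw [← hwf (b t - b t'), map_sub]
      rw [e2, e1, show (h₁ - f (b t')) - (h₁ - f (b t))
        = -((h₁ - f (b t)) - (h₁ - f (b t'))) by abel, hw.v_neg_s7,
        hw.v_sub_eq (hβtm t t' h)]
    have hcauchy : IsPseudoCauchy v b := by
      refine ⟨Classical.arbitrary _, fun i j k _ hij hjk => ?_⟩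
      rw [hval i j hij, hval j k hjk]
      exact hβtm i j hij
    obtain ⟨x, i₁, hx⟩ := hpc ob.ToType b hcauchy
    have hwx : ∀ i, i₁ ≤ i → w (f x - f (b i)) = βt i := by
      intro i hi
      obtain ⟨j, hj⟩ := exists_gt i
      have e1 : v (b i - x) = βt i := by rw [hx i j hi hj, hval i j hj]
      rw [show f x - f (b i) = -(f (b i) - f x) by abel, hw.v_neg_s7, ← map_sub, hwf]
      exact e1
    have hfar : ∀ i, i₁ ≤ i → βt i ≤ w (h₁ - f x) := by
      intro i hi
      have e1 : h₁ - f x = (h₁ - f (b i)) - (f x - f (b i)) := by abel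
      rw [e1]
      have := hw.min_le_sub (h₁ - f (b i)) (f x - f (b i))
      rw [hwx i hi] at this
      exact le_trans (le_min le_rfl le_rfl) this
    refine hob ⟨x, fun o' h' => ?_⟩
    set p₁ : Ordinal := (e.symm i₁ : Ordinal) with hp₁
    have hq : max o' p₁ + 1 < ob := hlim _ (max_lt h' (e.symm i₁).2)
    set t : ob.ToType := e ⟨max o' p₁ + 1, hq⟩ with ht
    have hts : e.symm t = ⟨max o' p₁ + 1, hq⟩ := by rw [ht, OrderIso.symm_apply_apply]
    have hi₁t : i₁ ≤ t := by
      have : e.symm i₁ ≤ e.symm t := by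
        rw [hts]
        exact le_of_lt (Subtype.mk_lt_mk.2 (lt_of_le_of_lt (le_max_right o' p₁)
          (lt_add_one _)))
      simpa using e.symm.le_iff_le.1 this
    have hβtt : β o' < βt t := by
      have : β o' < β (max o' p₁ + 1) :=
        hβm o' _ (lt_of_le_of_lt (le_max_left o' p₁) (lt_add_one _)) hq
      rw [hβt]
      simp only
      rw [hb]
      simp only
      rw [hts]
      exact this
    exact lt_of_lt_of_le hβtt (hfar t hi₁t)

end VGAux


/-- A ℤ-invariant valued abelian group `G` is maximal if and only if it
is pseudo-complete. -/
theorem maximal_iff_pseudoComplete {G Γ : Type u} [AddCommGroup G] [LinearOrder Γ]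
    [OrderTop Γ] (v : G → Γ) (hv : IsValuedGroup v)
    (hinv : ∀ (g : G) (n : ℕ), 0 < n → v (n • g) = v g) :
    IsMaximal v ↔ IsPseudoComplete v := by
  constructor
  · intro hmax I _ _ _ _ a hca
    by_contra hno
    exact VGAux.not_max hv hinv a hca hno hmax
  · exact fun hpc => VGAux.max_of_pc hv hpc
end

section
/- Let Γ be a linear order and R an abelian group. The additive group of Hahn series HahnSeries Γ R (functions Γ → R with partially well-ordered support), equipped with the valuation sending f to orderTop f ∈ WithTop Γ (the least element of the support of f, and ⊤ for f = 0), is pseudo-complete: every pseudo-Cauchy sequence in HahnSeries Γ R admits a pseudo-limit in HahnSeries Γ R. -/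
/-- Let `Γ` be a linear order and `R` an abelian group. The additive group
of Hahn series `HahnSeries Γ R`, equipped with the valuation `f ↦ orderTop f ∈ WithTop Γ`,
is pseudo-complete: every pseudo-Cauchy sequence (indexed by a well-ordered set with no
greatest element) admits a pseudo-limit in `HahnSeries Γ R`. -/
theorem hahnSeries_pseudoComplete {Γ R : Type*} [LinearOrder Γ] [AddCommGroup R]
    (I : Type*) [LinearOrder I] [WellFoundedLT I] [NoMaxOrder I] [Nonempty I]
    (a : I → HahnSeries Γ R)
    (hpc : IsPseudoCauchy (fun f : HahnSeries Γ R => f.orderTop) a) :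
    ∃ x : HahnSeries Γ R, IsPseudoLimit (fun f : HahnSeries Γ R => f.orderTop) a x := by
  classical
  obtain ⟨i₀, h⟩ := hpc
  simp only [] at h
  -- a successor function
  have hex : ∀ i : I, ∃ j, i < j := fun i => exists_gt i
  set s : I → I := fun i => (hex i).choose with hs
  have hlt : ∀ i, i < s i := fun i => (hex i).choose_spec
  -- the "gauge" of the sequence
  set γ : I → WithTop Γ := fun i => (a i - a (s i)).orderTop with hγ
  -- independence of the choice of the later index
  have hind : ∀ i j, i₀ ≤ i → i < j → (a i - a j).orderTop = γ i := by
    intro i j hi hij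
    rcases lt_trichotomy j (s i) with hj | hj | hj
    · have hlt' := h i j (s i) hi hij hj
      have e : a i - a (s i) = (a i - a j) + (a j - a (s i)) := by abel
      rw [hγ]
      simp only [e]
      exact (HahnSeries.orderTop_add_eq_left hlt').symm
    · rw [hγ]; simp only [hj]
    · have hlt' := h i (s i) j hi (hlt i) hj
      have e : a i - a j = (a i - a (s i)) + (a (s i) - a j) := by abel
      rw [e]
      exact HahnSeries.orderTop_add_eq_left hlt'
  -- strict monotonicity of the gauge
  have hmono : ∀ i j, i₀ ≤ i → i < j → γ i < γ j := by
    intro i j hi hij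
    have := h i j (s j) hi hij (hlt j)
    rwa [hind i j hi hij] at this
  have hne : ∀ i, i₀ ≤ i → γ i ≠ ⊤ := fun i hi => (hmono i (s i) hi (hlt i)).ne_top
  -- well-definedness of coefficients below the gauge
  have hwd : ∀ (g : Γ) (i j : I), i₀ ≤ i → i₀ ≤ j → (g : WithTop Γ) < γ i →
      (g : WithTop Γ) < γ j → (a i).coeff g = (a j).coeff g := by
    have key : ∀ (g : Γ) (i j : I), i₀ ≤ i → (g : WithTop Γ) < γ i →
        i ≤ j → (a i).coeff g = (a j).coeff g := by
      intro g i j hi hgi hij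
      rcases eq_or_lt_of_le hij with rfl | hij
      · rfl
      · have := hind i j hi hij
        have h0 : (a i - a j).coeff g = 0 :=
          HahnSeries.coeff_eq_zero_of_lt_orderTop (by rw [this]; exact hgi)
        rw [HahnSeries.coeff_sub] at h0
        exact sub_eq_zero.mp h0
    intro g i j hi hj hgi hgj
    rcases le_total i j with hij | hij
    · exact key g i j hi hgi hij
    · exact (key g j i hj hgj hij).symm
  -- the candidate coefficient function
  set c : Γ → R := fun g =>
    if hg : ∃ i, i₀ ≤ i ∧ (g : WithTop Γ) < γ i then (a hg.choose).coeff g else 0 with hc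
  have hcval : ∀ (g : Γ) (i : I), i₀ ≤ i → (g : WithTop Γ) < γ i → c g = (a i).coeff g := by
    intro g i hi hgi
    have hg : ∃ i, i₀ ≤ i ∧ (g : WithTop Γ) < γ i := ⟨i, hi, hgi⟩
    rw [hc]
    simp only [dif_pos hg]
    exact hwd g hg.choose i hg.choose_spec.1 hi hg.choose_spec.2 hgi
  -- the support of `c` is partially well-ordered
  have hpwo : (Function.support c).IsPWO := by
    apply Set.IsWF.isPWO
    rw [Set.isWF_iff_no_descending_seq]
    intro f hf hmem
    have h0 : c (f 0) ≠ 0 := hmem 0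
    have hex0 : ∃ i, i₀ ≤ i ∧ ((f 0 : Γ) : WithTop Γ) < γ i := by
      by_contra hne'
      exact h0 (by rw [hc]; simp only [dif_neg hne'])
    obtain ⟨i, hi, hgi⟩ := hex0
    have hsupp : ∀ n, f n ∈ (a i).support := by
      intro n
      have hle : f n ≤ f 0 := hf.antitone (Nat.zero_le n)
      have hlt' : ((f n : Γ) : WithTop Γ) < γ i :=
        lt_of_le_of_lt (WithTop.coe_le_coe.mpr hle) hgi
      have := hcval (f n) i hi hlt'
      exact fun hz => (hmem n) (show c (f n) = 0 by rw [this, hz])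
    exact Set.isWF_iff_no_descending_seq.mp (a i).isWF_support f hf hsupp
  set x : HahnSeries Γ R := ⟨c, hpwo⟩ with hx
  have hxcoeff : ∀ g, x.coeff g = c g := fun g => rfl
  refine ⟨x, i₀, ?_⟩
  intro i j hi hij
  simp only []
  rw [hind i j hi hij]
  -- the value of `γ i` in `Γ`
  obtain ⟨g₀, hg₀⟩ : ∃ g₀ : Γ, γ i = (g₀ : WithTop Γ) := by
    rcases hγi : γ i with _ | g₀
    · exact absurd hγi (hne i hi)
    · exact ⟨g₀, rfl⟩
  -- coefficients of `a i - x` vanish below `γ i`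
  have hvanish : ∀ g : Γ, (g : WithTop Γ) < γ i → (a i - x).coeff g = 0 := by
    intro g hg
    rw [HahnSeries.coeff_sub, hxcoeff, hcval g i hi hg, sub_self]
  -- the coefficient of `a i - x` at `g₀` is nonzero
  have hg₀lt : ((g₀ : Γ) : WithTop Γ) < γ (s i) := hg₀ ▸ hmono i (s i) hi (hlt i)
  have hnz : (a i - x).coeff g₀ ≠ 0 := by
    have hxg : x.coeff g₀ = (a (s i)).coeff g₀ :=
      (hxcoeff g₀).trans (hcval g₀ (s i) (hi.trans (hlt i).le) hg₀lt)
    have horder : (a i - a (s i)).orderTop = (g₀ : WithTop Γ) := by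
      rw [← hγ] at *
      exact hg₀ ▸ rfl
    have := HahnSeries.coeff_orderTop_ne horder
    rw [HahnSeries.coeff_sub, hxg, ← HahnSeries.coeff_sub]
    exact this
  -- conclude
  rw [hg₀]
  apply HahnSeries.orderTop_eq_of_le
  · exact hnz
  · intro g' hg'
    by_contra hlt'
    push_neg at hlt'
    exact hg' (hvanish g' (by rw [hg₀]; exact_mod_cast hlt'))
end

section
/- Let (G, v) be a valued abelian group and m ∈ ℕ. For a ∈ G let V_a^m := {x ∈ G : v(a + m·g) < v(x) for all g ∈ G}. Then for all a, b ∈ G one has V_{a+b}^m ⊆ V_a^m ∪ V_b^m; consequently the map val^m (ordering classes by reverse inclusion of the sets V^m) is a pre-valuation on G and induces a valuation on the quotient group G/mG. -/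
universe u

/-- For a valued abelian group `(G, v)`, `m ∈ ℕ` and `a ∈ G`, the set
`V_a^m = {x ∈ G : v (a + m • g) < v x for all g ∈ G}`, i.e. the largest convex subgroup
of `G` not meeting `a + mG` (and `∅` if `a ∈ mG`). -/
def Vm {G Γ : Type*} [AddCommGroup G] [LinearOrder Γ] (v : G → Γ) (m : ℕ) (a : G) :
    Set G :=
  {x : G | ∀ g : G, v (a + m • g) < v x}

/-- For all `a, b ∈ G` one has `V_{a+b}^m ⊆ V_a^m ∪ V_b^m`; consequently
the map `val^m` (classes ordered by reverse inclusion of the sets `V^m`) is a pre-valuation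
on `G` and induces a valuation on the quotient group `G/mG`: the sets `V^m` are well defined
modulo `mG`, are linearly ordered by reverse inclusion, and `V_a^m` equals the `V^m`-set of
`0` (the "value ∞") exactly when `a ∈ mG`. -/
theorem Vm_add_subset_union {G Γ : Type*} [AddCommGroup G] [LinearOrder Γ] [OrderTop Γ]
    (v : G → Γ) (hv : IsValuedGroup v) (m : ℕ) :
    (∀ a b : G, Vm v m (a + b) ⊆ Vm v m a ∪ Vm v m b) ∧
    (∀ a b : G, (∃ y : G, a - b = m • y) → Vm v m a = Vm v m b) ∧
    (∀ a b : G, Vm v m a ⊆ Vm v m b ∨ Vm v m b ⊆ Vm v m a) ∧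
    (∀ a : G, Vm v m a = Vm v m 0 ↔ ∃ y : G, a = m • y) := by

  have hv0 : v (0 : G) = ⊤ := (hv.eq_top_iff 0).mpr rfl
  have hneg : ∀ t : G, v t ≤ v (-t) := by
    intro t
    have := hv.min_le_sub 0 t
    simpa [hv0] using this
  have hneg' : ∀ t : G, v (-t) = v t := fun t =>
    le_antisymm (by simpa using hneg (-t)) (hneg t)
  have hadd : ∀ s t : G, min (v s) (v t) ≤ v (s + t) := by
    intro s t
    have := hv.min_le_sub s (-t)
    simpa [hneg', sub_neg_eq_add] using this
  have hVm0 : Vm v m (0 : G) = ∅ := by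
    ext x
    simp only [Vm, Set.mem_setOf_eq, Set.mem_empty_iff_false, iff_false, not_forall]
    exact ⟨0, by simp [hv0]⟩
  refine ⟨?_, ?_, ?_, ?_⟩
  · intro a b x hx
    by_contra hx'
    rw [Set.mem_union, not_or] at hx'
    obtain ⟨ha, hb⟩ := hx'
    simp only [Vm, Set.mem_setOf_eq, not_forall, not_lt] at ha hb
    obtain ⟨g, hg⟩ := ha
    obtain ⟨h, hh⟩ := hb
    have hmin : v x ≤ min (v (a + m • g)) (v (b + m • h)) := le_min hg hh
    have := hadd (a + m • g) (b + m • h)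
    have hle : v x ≤ v (a + b + m • (g + h)) := by
      refine le_trans hmin (le_trans this (le_of_eq (congrArg v (by rw [smul_add]; abel))))
    exact absurd (hx (g + h)) (not_lt.mpr hle)
  · intro a b ⟨y, hy⟩
    have hab : a = b + m • y := by rw [← hy]; abel
    ext x
    simp only [Vm, Set.mem_setOf_eq]
    constructor
    · intro hx g
      have := hx (g - y)
      rwa [hab, smul_sub, show b + m • y + (m • g - m • y) = b + m • g by abel] at this
    · intro hx g
      have := hx (y + g)
      rwa [smul_add, show b + (m • y + m • g) = b + m • y + m • g by abel, ← hab] at this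
  · intro a b
    by_contra hc
    push_neg at hc
    obtain ⟨x, hxa, hxb⟩ := Set.not_subset.mp hc.1
    obtain ⟨y, hyb, hya⟩ := Set.not_subset.mp hc.2
    simp only [Vm, Set.mem_setOf_eq, not_forall, not_lt] at hxa hxb hya hyb
    obtain ⟨h, hh⟩ := hxb
    obtain ⟨g, hg⟩ := hya
    exact absurd (lt_trans (lt_of_le_of_lt hg (hxa g)) (lt_of_le_of_lt hh (hyb h)))
      (lt_irrefl _)
  · intro a
    rw [hVm0]
    constructor
    · intro h
      by_contra hne
      push_neg at hne
      have : (0 : G) ∈ Vm v m a := by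
        intro g
        rw [hv0]
        refine lt_of_le_of_ne le_top ?_
        intro he
        exact hne (-g) (by simpa [smul_neg, eq_neg_iff_add_eq_zero] using
          (hv.eq_top_iff _).mp he)
      rw [h] at this
      exact this
    · rintro ⟨y, rfl⟩
      ext x
      simp only [Vm, Set.mem_setOf_eq, Set.mem_empty_iff_false, iff_false, not_forall]
      exact ⟨-y, by simp [hv0]⟩
end

section
/- Every pseudo-complete ℤ-invariant valued abelian group (G, v) satisfies property (M): for every integer m > 0 and every x ∈ G there exists y ∈ G with x − y ∈ mG and V_x^m = {z ∈ G : v(z) > v(y)}. -/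
universe u

theorem exists_wellOrdered_cofinal {α : Type*} [LinearOrder α] :
    ∃ C : Set α, (∀ a : α, ∃ c ∈ C, a ≤ c) ∧ WellFoundedLT C := by
  have wo : IsWellOrder α WellOrderingRel := WellOrderingRel.isWellOrder
  have wf : WellFounded (WellOrderingRel (α := α)) := wo.wf
  refine ⟨{a | ∀ b, WellOrderingRel b a → b < a}, ?_, ?_⟩
  · intro x
    have hne : {a | x ≤ a}.Nonempty := ⟨x, le_rfl⟩
    refine ⟨wf.min _ hne, ?_, wf.min_mem _ hne⟩
    intro b hb
    by_contra hlt
    push_neg at hlt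
    exact wf.not_lt_min _ (le_trans (wf.min_mem _ hne) hlt) hb
  · constructor
    refine Subrelation.wf (r := InvImage WellOrderingRel Subtype.val) ?_ (InvImage.wf _ wf)
    intro a b hab
    rcases trichotomous_of WellOrderingRel a.1 b.1 with h | h | h
    · exact h
    · exact absurd (Subtype.ext h) (ne_of_lt hab)
    · exact absurd (a.2 b.1 h) (not_lt.2 (le_of_lt hab))

/-- Every pseudo-complete ℤ-invariant valued abelian group `(G, v)`
satisfies property (M): for every integer `m > 0` and every `x ∈ G` there exists `y ∈ G`
with `x - y ∈ mG` and `V_x^m = {z ∈ G : v z > v y}`. -/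
theorem propertyM_of_pseudoComplete {G Γ : Type u} [AddCommGroup G] [LinearOrder Γ]
    [OrderTop Γ] (v : G → Γ) (hv : IsValuedGroup v)
    (hinv : ∀ (g : G) (n : ℕ), 0 < n → v (n • g) = v g)
    (hpc : IsPseudoComplete v) :
    ∀ m : ℕ, 0 < m → ∀ x : G, ∃ y : G,
      (∃ w : G, x - y = m • w) ∧ Vm v m x = {z : G | v y < v z} := by
  -- basic valuation facts
  have v0 : v (0 : G) = ⊤ := (hv.eq_top_iff 0).2 rfl
  have vneg1 : ∀ g : G, v g ≤ v (-g) := by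
    intro g
    have := hv.min_le_sub 0 g
    simpa [v0] using this
  have vneg : ∀ g : G, v (-g) = v g := by
    intro g
    refine le_antisymm ?_ (vneg1 g)
    simpa using vneg1 (-g)
  have vadd : ∀ g h : G, min (v g) (v h) ≤ v (g + h) := by
    intro g h
    have := hv.min_le_sub g (-h)
    simpa [vneg, sub_neg_eq_add] using this
  have vlt : ∀ g h : G, v g < v h → v (g - h) = v g := by
    intro g h hgh
    have h1 : v g ≤ v (g - h) := le_trans (le_of_eq (min_eq_left hgh.le).symm) (hv.min_le_sub g h)
    refine le_antisymm ?_ h1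
    by_contra hc
    push_neg at hc
    have he : (g - h) + h = g := by abel
    have : min (v (g - h)) (v h) ≤ v g := by
      have := vadd (g - h) h; rwa [he] at this
    exact absurd this (not_le.2 (lt_min hc hgh))
  intro m hm x
  -- main claim: the value set of x + mG attains a maximum
  have key : ∃ g : G, ∀ g' : G, v (x + m • g') ≤ v (x + m • g) := by
    by_contra hno
    push_neg at hno
    -- hno : ∀ g, ∃ g', v (x + m • g) < v (x + m • g')
    set S : Set Γ := Set.range (fun g : G => v (x + m • g)) with hS
    obtain ⟨C, hCcof, hCwf⟩ := exists_wellOrdered_cofinal (α := ↥S)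
    haveI : WellFoundedLT ↥C := hCwf
    have hSne : Nonempty ↥S := ⟨⟨v (x + m • (0 : G)), ⟨0, rfl⟩⟩⟩
    haveI : Nonempty ↥C := by
      obtain ⟨s⟩ := hSne
      obtain ⟨c, hc, _⟩ := hCcof s
      exact ⟨⟨c, hc⟩⟩
    haveI : NoMaxOrder ↥C := by
      constructor
      intro i
      obtain ⟨g, hg⟩ := i.1.2
      obtain ⟨g', hg'⟩ := hno g
      obtain ⟨c, hc, hle⟩ := hCcof ⟨v (x + m • g'), ⟨g', rfl⟩⟩
      refine ⟨⟨c, hc⟩, ?_⟩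
      have : (i.1 : Γ) < (c : Γ) := by
        calc (i.1 : Γ) = v (x + m • g) := hg.symm
        _ < v (x + m • g') := hg'
        _ ≤ (c : Γ) := hle
      exact this
    -- choose representatives
    choose gf hgf using fun i : ↥C => i.1.2
    set b : ↥C → G := gf with hb
    have hval : ∀ i : ↥C, v (x + m • b i) = (i.1 : Γ) := hgf
    have hdiff : ∀ i j : ↥C, i < j → v (b i - b j) = (i.1 : Γ) := by
      intro i j hij
      have e : m • (b i - b j) = (x + m • b i) - (x + m • b j) := by
        rw [smul_sub]; abel
      have h1 : v (b i - b j) = v ((x + m • b i) - (x + m • b j)) := by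
        rw [← hinv (b i - b j) m hm, e]
      have h2 : v (x + m • b i) < v (x + m • b j) := by
        rw [hval i, hval j]; exact hij
      rw [h1, vlt _ _ h2, hval i]
    have hbc : IsPseudoCauchy v b := by
      obtain ⟨i⟩ := (inferInstance : Nonempty ↥C)
      refine ⟨i, fun i j k _ hij hjk => ?_⟩
      rw [hdiff i j hij, hdiff j k hjk]
      exact hij
    obtain ⟨ℓ, i₁, hℓ⟩ := hpc ↥C b hbc
    set y : G := x + m • ℓ with hy
    -- v y is an upper bound for S beyond i₁
    have hub : ∀ i : ↥C, i₁ ≤ i → (i.1 : Γ) ≤ v y := by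
      intro i hi
      obtain ⟨j, hj⟩ := exists_gt i
      have h1 : v (b i - ℓ) = (i.1 : Γ) := by
        rw [hℓ i j hi hj, hdiff i j hj]
      have e : y - (x + m • b i) = m • (ℓ - b i) := by
        rw [smul_sub, hy]; abel
      have h2 : v (y - (x + m • b i)) = (i.1 : Γ) := by
        rw [e, hinv _ m hm, ← vneg (ℓ - b i), neg_sub, h1]
      have e2 : (y - (x + m • b i)) + (x + m • b i) = y := by abel
      have := vadd (y - (x + m • b i)) (x + m • b i)
      rw [e2, h2, hval i, min_self] at this
      exact this
    -- contradiction: v y ∈ S but something in S exceeds it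
    obtain ⟨g', hg'⟩ := hno ℓ
    obtain ⟨c, hc, hle⟩ := hCcof ⟨v (x + m • g'), ⟨g', rfl⟩⟩
    set j : ↥C := max ⟨c, hc⟩ i₁ with hj
    have h3 : (j.1 : Γ) ≤ v y := hub j (le_max_right _ _)
    have h4 : (c : Γ) ≤ (j.1 : Γ) := by
      have : (⟨c, hc⟩ : ↥C) ≤ j := le_max_left _ _
      exact_mod_cast this
    have : v (x + m • g') ≤ v y := le_trans (le_trans hle h4) h3
    exact absurd hg' (not_lt.2 this)
  obtain ⟨g, hg⟩ := key
  refine ⟨x + m • g, ⟨-g, by rw [smul_neg]; abel⟩, ?_⟩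
  ext z
  constructor
  · intro hz
    exact hz g
  · intro hz g'
    exact lt_of_le_of_lt (hg g') hz
end

section
/- Let (G, v) be a ℤ-invariant valued abelian group satisfying property (M), let m > 1, and let γ ∈ Γ ∖ {∞}. Then the following are equivalent: (a) γ belongs to the m-spine, i.e. there exists g ∈ G ∖ mG with V_g^m = V_γ := {z ∈ G : v(z) > γ}; (b) the rib R_γ = C_γ/V_γ is not divisible by m, i.e. there exists c ∈ G with v(c) ≥ γ such that for every c' ∈ G with v(c') ≥ γ one has c − m·c' ∉ V_γ (equivalently v(c − m·c') = γ), where C_γ = {x : v(x) ≥ γ}. -/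
universe u

/-- Let `(G, v)` be a ℤ-invariant valued abelian group satisfying property
(M), let `m > 1`, and let `γ ∈ Γ ∖ {∞}`. Then the following are equivalent:
(a) `γ` belongs to the `m`-spine, i.e. there exists `g ∈ G ∖ mG` with
`V_g^m = V_γ = {z : v z > γ}`;
(b) the rib `R_γ = C_γ/V_γ` is not divisible by `m`, i.e. there exists `c` with `v c ≥ γ`
such that for every `c'` with `v c' ≥ γ` one has `c - m • c' ∉ V_γ`. -/
theorem mem_mSpine_iff_rib_not_divisible {G Γ : Type*} [AddCommGroup G] [LinearOrder Γ]
    [OrderTop Γ] (v : G → Γ) (hv : IsValuedGroup v)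
    (hinv : ∀ (g : G) (n : ℕ), 0 < n → v (n • g) = v g)
    (hM : ∀ m : ℕ, 0 < m → ∀ x : G, ∃ y : G,
      (∃ w : G, x - y = m • w) ∧ Vm v m x = {z : G | v y < v z})
    (m : ℕ) (hm : 1 < m) (γ : Γ) (hγ : γ ≠ ⊤) :
    (∃ g : G, (∀ y : G, g ≠ m • y) ∧ Vm v m g = {z : G | γ < v z}) ↔
      (∃ c : G, γ ≤ v c ∧ ∀ c' : G, γ ≤ v c' → ¬ γ < v (c - m • c')) := by
  have hmpos : 0 < m := by omega
  constructor
  · rintro ⟨g, hgm, hVg⟩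
    -- All values v (g + m•h) are ≤ γ
    have hle : ∀ h : G, v (g + m • h) ≤ γ := by
      intro h
      by_contra hlt
      push_neg at hlt
      have hmem : (g + m • h) ∈ Vm v m g := by
        rw [hVg]; exact hlt
      exact lt_irrefl _ (hmem h)
    -- Some value is exactly γ
    obtain ⟨z0, hz0⟩ := hv.surjective γ
    have hz0n : z0 ∉ Vm v m g := by
      rw [hVg]; simp [hz0]
    have hex : ∃ h : G, γ ≤ v (g + m • h) := by
      by_contra hc
      push_neg at hc
      exact hz0n (fun h => hz0 ▸ hc h)
    obtain ⟨h0, hh0⟩ := hex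
    refine ⟨g + m • h0, hh0, ?_⟩
    intro c' _
    have : g + m • h0 - m • c' = g + m • (h0 - c') := by
      rw [smul_sub]; abel
    rw [this]
    exact not_lt.mpr (hle _)
  · rintro ⟨c, hc, hcd⟩
    obtain ⟨y, ⟨w, hw⟩, hVc⟩ := hM m hmpos c
    -- v c = γ
    have hc0 : v c ≤ γ := by
      have := hcd 0 (by simp [(hv.eq_top_iff 0).mpr rfl, le_top])
      simpa using this
    have hvc : v c = γ := le_antisymm hc0 hc
    -- y = c + m • (-w)
    have hy : y = c + m • (-w) := by
      rw [smul_neg, ← hw]; abel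
    -- all values v (c + m • h) are ≤ v y
    have hle2 : ∀ h : G, v (c + m • h) ≤ v y := by
      intro h
      by_contra hlt
      push_neg at hlt
      have hmem : (c + m • h) ∈ Vm v m c := by
        rw [hVc]; exact hlt
      exact lt_irrefl _ (hmem h)
    -- v y = γ
    have hyγ : v y = γ := by
      rcases lt_trichotomy (v y) γ with hlt | heq | hgt
      · -- then c ∈ Vm v m c, contradiction at h = 0
        exfalso
        have hmem : c ∈ Vm v m c := by
          rw [hVc]
          exact lt_of_lt_of_le hlt hvc.ge
        have := hmem 0
        simp at this
      · exact heq
      · -- then v w ≥ γ, contradicting hcd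
        exfalso
        have hvw : γ ≤ v w := by
          have h1 : v (m • w) = v w := hinv w m hmpos
          have h2 : min (v c) (v y) ≤ v (c - y) := hv.min_le_sub c y
          rw [hw, h1] at h2
          exact le_trans (le_min hvc.ge hgt.le) h2
        have := hcd w hvw
        apply this
        have : c - m • w = y := by rw [hy, smul_neg]; abel
        rw [this]; exact hgt
    refine ⟨c, ?_, ?_⟩
    · intro u hu
      have h0 : v (c + m • (-u)) = ⊤ := by
        rw [smul_neg, hu, add_neg_cancel, (hv.eq_top_iff 0).mpr rfl]
      have := hle2 (-u)
      rw [h0, hyγ] at this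
      exact hγ (top_le_iff.mp this)
    · rw [hVc, hyγ]
end

section
/- Let (G, v) be a valued abelian group, m ∈ ℕ, and a ∈ G ∖ mG. Then the set V_a^m := {x ∈ G : v(a + m·g) < v(x) for all g ∈ G} is a convex subgroup of G (i.e. a subgroup such that x ∈ V_a^m and v(y) ≥ v(x) imply y ∈ V_a^m), it satisfies a ∉ V_a^m + mG, and every convex subgroup H of G with a ∉ H + mG is contained in V_a^m; that is, V_a^m is the largest convex subgroup H of G with a ∉ H + mG. -/
universe u

/-- Let `(G, v)` be a valued abelian group, `m ∈ ℕ`, and `a ∈ G ∖ mG`.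
Then `V_a^m = {x : v (a + m • g) < v x for all g}` is a convex subgroup of `G` (it contains
`0`, is closed under subtraction, and `x ∈ V_a^m` together with `v y ≥ v x` implies
`y ∈ V_a^m`), it satisfies `a ∉ V_a^m + mG`, and every convex subgroup `H` of `G` with
`a ∉ H + mG` is contained in `V_a^m`; that is, `V_a^m` is the largest convex subgroup `H`
of `G` with `a ∉ H + mG`. -/
theorem Vm_largest_convex_subgroup {G Γ : Type*} [AddCommGroup G] [LinearOrder Γ]
    [OrderTop Γ] (v : G → Γ) (hv : IsValuedGroup v) (m : ℕ) (a : G)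
    (ha : ∀ y : G, a ≠ m • y) :
    (0 : G) ∈ Vm v m a ∧
    (∀ x ∈ Vm v m a, ∀ y ∈ Vm v m a, x - y ∈ Vm v m a) ∧
    (∀ x ∈ Vm v m a, ∀ y : G, v x ≤ v y → y ∈ Vm v m a) ∧
    (∀ h ∈ Vm v m a, ∀ y : G, a ≠ h + m • y) ∧
    (∀ H : AddSubgroup G, (∀ x ∈ H, ∀ y : G, v x ≤ v y → y ∈ H) →
      (∀ h ∈ H, ∀ y : G, a ≠ h + m • y) → (H : Set G) ⊆ Vm v m a) := by
  refine ⟨?_, ?_, ?_, ?_, ?_⟩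
  · intro g
    have : v (0 : G) = ⊤ := (hv.eq_top_iff 0).mpr rfl
    rw [this]
    exact lt_top_iff_ne_top.mpr fun h => ha (-g) (by
      have := (hv.eq_top_iff _).mp h
      rw [smul_neg]; linear_combination (norm := abel) this)
  · intro x hx y hy g
    exact lt_of_lt_of_le (lt_min (hx g) (hy g)) (hv.min_le_sub x y)
  · intro x hx y hxy g
    exact lt_of_lt_of_le (hx g) hxy
  · intro h hh y hay
    have := hh (-y)
    rw [smul_neg, hay] at this
    simp at this
  · intro H hconv hne x hx g
    by_contra hle
    push_neg at hle
    have hmem : a + m • g ∈ H := hconv x hx _ hle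
    exact hne _ hmem (-g) (by rw [smul_neg]; abel)
end
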